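/- arXiv:2202.07739 — 8 statements merged into one kernel-verified Lean document; each statement's English description precedes it below -/
import Mathlib

section
/- The set U₀ lies in the c₀-sublevel set of V₀: let γ > 0, ε₀ > 0 and c₀ > 0 be given, set c̃₀ := ε₀·α and d₀ := c₀ - γ·c̃₀²/α, and assume d₀ > 0. Then every (z₁, z₂) ∈ ℝ^n × ℝ^n with ‖∇L(z₁)‖ ≤ c̃₀ and ½‖z₂‖² ≤ d₀ satisfies V₀(z₁, z₂) ≤ c₀. -/
open scoped RealInnerProductSpace

noncomputable section

/-- Convex differentiable function lies above its tangent plane. -/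
lemma grad_ineq {n : ℕ} (L : EuclideanSpace ℝ (Fin n) → ℝ)
    (hC1 : ContDiff ℝ 1 L) (hconv : ConvexOn ℝ Set.univ L)
    (x y : EuclideanSpace ℝ (Fin n)) :
    ⟪gradient L x, y - x⟫ ≤ L y - L x := by
  have hdiff : DifferentiableAt ℝ L x := (hC1.differentiable one_ne_zero) x
  have hGrad : HasGradientAt L (gradient L x) x := hdiff.hasGradientAt
  set v := y - x with hv
  set g : ℝ → ℝ := fun t => L (x + t • v) with hg
  have hgconv : ConvexOn ℝ Set.univ g := by
    have h := hconv.comp_affineMap (AffineMap.lineMap x (x + v))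
    have he : (AffineMap.lineMap x (x + v) : ℝ →ᵃ[ℝ] _) ⁻¹' Set.univ = Set.univ := by
      simp
    rw [he] at h
    have hfun : g = L ∘ ⇑(AffineMap.lineMap x (x + v) : ℝ →ᵃ[ℝ] _) := by
      funext t
      simp [hg, AffineMap.lineMap_apply, add_comm]
    rw [hfun]; exact h
  have hcurve : HasDerivAt (fun t : ℝ => x + t • v) v 0 :=
    ((hasDerivAt_id (0:ℝ)).smul_const v).const_add x |>.congr_deriv (by simp)
  have hF : HasFDerivAt L ((InnerProductSpace.toDual ℝ _ (gradient L x)) :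
      EuclideanSpace ℝ (Fin n) →L[ℝ] ℝ) x :=
    (hasGradientAt_iff_hasFDerivAt.mp hGrad)
  have hgd : HasDerivAt g ⟪gradient L x, v⟫ 0 := by
    have hF' : HasFDerivAt L ((InnerProductSpace.toDual ℝ _ (gradient L x)) :
        EuclideanSpace ℝ (Fin n) →L[ℝ] ℝ) (x + (0:ℝ) • v) := by simpa using hF
    have := hF'.comp_hasDerivAt (0:ℝ) hcurve
    simp at this ⊢
    exact this
  have hslope := hgconv.le_slope_of_hasDerivAt (Set.mem_univ 0) (Set.mem_univ 1)
    one_pos hgd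
  have : slope g 0 1 = g 1 - g 0 := by simp [slope_def_field]
  rw [this] at hslope
  simpa [hg, hv] using hslope

/-- The set `U₀` lies in the `c₀`-sublevel set of `V₀`:
with `c̃₀ = ε₀ α` and `d₀ = c₀ - γ c̃₀²/α > 0`, every `(z₁, z₂)` with
`‖∇L(z₁)‖ ≤ c̃₀` and `½‖z₂‖² ≤ d₀` satisfies `V₀(z₁,z₂) ≤ c₀`. -/
theorem U0_in_sublevel_V0 {n : ℕ} (hn : 1 ≤ n)
    (L : EuclideanSpace ℝ (Fin n) → ℝ)
    (hC1 : ContDiff ℝ 1 L)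
    (hconv : ConvexOn ℝ Set.univ L)
    (zs : EuclideanSpace ℝ (Fin n))
    (hmin : ∀ z, L zs ≤ L z)
    (huniq : ∀ z, (∀ y, L z ≤ L y) → z = zs)
    (α : ℝ) (hα : 0 < α)
    (hQG : ∀ z, α * ‖z - zs‖ ^ 2 ≤ L z - L zs)
    (γ ε₀ c₀ : ℝ) (hγ : 0 < γ) (hε₀ : 0 < ε₀) (hc₀ : 0 < c₀)
    (hd₀ : 0 < c₀ - γ * ((ε₀ * α) ^ 2 / α)) :
    ∀ z₁ z₂ : EuclideanSpace ℝ (Fin n),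
      ‖gradient L z₁‖ ≤ ε₀ * α →
      (1 / 2) * ‖z₂‖ ^ 2 ≤ c₀ - γ * ((ε₀ * α) ^ 2 / α) →
      γ * (L z₁ - L zs) + (1 / 2) * ‖z₂‖ ^ 2 ≤ c₀ := by
  intro z₁ z₂ hg hz₂
  have hc : 0 < ε₀ * α := mul_pos hε₀ hα
  set c := ε₀ * α with hcdef
  have key : ⟪gradient L z₁, zs - z₁⟫ ≤ L zs - L z₁ :=
    grad_ineq L hC1 hconv z₁ zs
  set r := ‖z₁ - zs‖ with hr
  have hr0 : 0 ≤ r := norm_nonneg _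
  have hub : L z₁ - L zs ≤ c * r := by
    have h1 : L z₁ - L zs ≤ ⟪gradient L z₁, z₁ - zs⟫ := by
      have : ⟪gradient L z₁, zs - z₁⟫ = - ⟪gradient L z₁, z₁ - zs⟫ := by
        rw [← inner_neg_right]; congr 1; abel
      linarith [key, this ▸ key]
    have h2 : ⟪gradient L z₁, z₁ - zs⟫ ≤ ‖gradient L z₁‖ * r :=
      real_inner_le_norm _ _
    have h3 : ‖gradient L z₁‖ * r ≤ c * r :=
      mul_le_mul_of_nonneg_right hg hr0
    linarith
  have hlb : α * r ^ 2 ≤ L z₁ - L zs := hQG z₁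
  have hD : L z₁ - L zs ≤ c ^ 2 / α := by
    rw [le_div_iff₀ hα]
    nlinarith [hlb, hub, hr0, hc, hα, sq_nonneg (α * r - c)]
  have : γ * (L z₁ - L zs) ≤ γ * (c ^ 2 / α) :=
    mul_le_mul_of_nonneg_left hD hγ.le
  linarith
end
end

section
/- Boundedness of heavy ball solutions: along every solution of the heavy ball system, the function t ↦ V₀(z₁(t), z₂(t)) is nonincreasing on [0, ∞); consequently ‖z₁(t) - z₁*‖² + ‖z₂(t)‖² ≤ V₀(z₁(0), z₂(0)) / min{αγ, ½} for all t ≥ 0. -/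
open scoped RealInnerProductSpace

noncomputable section

/-- Boundedness of heavy ball solutions: `t ↦ V₀(z₁(t), z₂(t))` is nonincreasing
on `[0,∞)`, and `‖z₁(t) - z₁*‖² + ‖z₂(t)‖² ≤ V₀(z₁(0), z₂(0)) / min{αγ, ½}`. -/
theorem heavyBall_bounded {n : ℕ} (hn : 1 ≤ n)
    (L : EuclideanSpace ℝ (Fin n) → ℝ)
    (hC1 : ContDiff ℝ 1 L)
    (hconv : ConvexOn ℝ Set.univ L)
    (zs : EuclideanSpace ℝ (Fin n))
    (hmin : ∀ z, L zs ≤ L z)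
    (huniq : ∀ z, (∀ y, L z ≤ L y) → z = zs)
    (α : ℝ) (hα : 0 < α)
    (hQG : ∀ z, α * ‖z - zs‖ ^ 2 ≤ L z - L zs)
    (lam γ : ℝ) (hlam : 0 < lam) (hγ : 0 < γ)
    (z₁ z₂ : ℝ → EuclideanSpace ℝ (Fin n))
    (hz₁ : ∀ t, 0 ≤ t → HasDerivAt z₁ (z₂ t) t)
    (hz₂ : ∀ t, 0 ≤ t →
      HasDerivAt z₂ (-(lam • z₂ t) - γ • gradient L (z₁ t)) t) :
    AntitoneOn (fun t => γ * (L (z₁ t) - L zs) + (1 / 2) * ‖z₂ t‖ ^ 2)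
      (Set.Ici (0 : ℝ)) ∧
    ∀ t, 0 ≤ t →
      ‖z₁ t - zs‖ ^ 2 + ‖z₂ t‖ ^ 2
        ≤ (γ * (L (z₁ 0) - L zs) + (1 / 2) * ‖z₂ 0‖ ^ 2) / min (α * γ) (1 / 2) := by
  set V : ℝ → ℝ := fun t => γ * (L (z₁ t) - L zs) + (1 / 2) * ‖z₂ t‖ ^ 2 with hVdef
  have hVderiv : ∀ t, 0 ≤ t → HasDerivAt V (-(lam * ‖z₂ t‖ ^ 2)) t := by
    intro t ht
    have hg : HasGradientAt L (gradient L (z₁ t)) (z₁ t) :=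
      ((hC1.differentiable one_ne_zero) (z₁ t)).hasGradientAt
    have hL : HasDerivAt (fun s => L (z₁ s)) ⟪gradient L (z₁ t), z₂ t⟫ t := by
      have := hg.hasFDerivAt.comp_hasDerivAt t (hz₁ t ht)
      exact this
    have hN : HasDerivAt (fun s => ‖z₂ s‖ ^ 2)
        (⟪z₂ t, -(lam • z₂ t) - γ • gradient L (z₁ t)⟫
          + ⟪-(lam • z₂ t) - γ • gradient L (z₁ t), z₂ t⟫) t := by
      have h := (hz₂ t ht).inner ℝ (hz₂ t ht)
      simp only [← real_inner_self_eq_norm_sq]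
      exact h
    have hV : HasDerivAt V
        (γ * ⟪gradient L (z₁ t), z₂ t⟫ + (1 / 2) *
          (⟪z₂ t, -(lam • z₂ t) - γ • gradient L (z₁ t)⟫
            + ⟪-(lam • z₂ t) - γ • gradient L (z₁ t), z₂ t⟫)) t :=
      (((hL.sub_const (L zs)).const_mul γ).add (hN.const_mul (1 / 2)))
    convert hV using 1
    have h1 : ⟪z₂ t, -(lam • z₂ t) - γ • gradient L (z₁ t)⟫
        = -(lam * ‖z₂ t‖ ^ 2) - γ * ⟪gradient L (z₁ t), z₂ t⟫ := by
      rw [inner_sub_right, inner_neg_right, real_inner_smul_right,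
        real_inner_smul_right, real_inner_self_eq_norm_sq, real_inner_comm]
    have h2 : ⟪-(lam • z₂ t) - γ • gradient L (z₁ t), z₂ t⟫
        = -(lam * ‖z₂ t‖ ^ 2) - γ * ⟪gradient L (z₁ t), z₂ t⟫ := by
      rw [inner_sub_left, inner_neg_left, real_inner_smul_left,
        real_inner_smul_left, real_inner_self_eq_norm_sq]
    rw [h1, h2]; ring
  have hanti : AntitoneOn V (Set.Ici (0 : ℝ)) := by
    apply antitoneOn_of_deriv_nonpos (convex_Ici 0)
    · exact fun t ht => (hVderiv t ht).continuousAt.continuousWithinAt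
    · intro t ht
      rw [interior_Ici] at ht
      exact (hVderiv t (le_of_lt ht)).differentiableAt.differentiableWithinAt
    · intro t ht
      rw [interior_Ici] at ht
      rw [(hVderiv t (le_of_lt ht)).deriv]
      have : 0 ≤ lam * ‖z₂ t‖ ^ 2 := by positivity
      linarith
  refine ⟨hanti, fun t ht => ?_⟩
  have hmpos : 0 < min (α * γ) (1 / 2) := by
    apply lt_min (by positivity); norm_num
  rw [le_div_iff₀ hmpos]
  have hVt : V t ≤ V 0 := hanti (Set.self_mem_Ici) ht ht
  have hq : α * γ * ‖z₁ t - zs‖ ^ 2 ≤ γ * (L (z₁ t) - L zs) := by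
    have := hQG (z₁ t)
    calc α * γ * ‖z₁ t - zs‖ ^ 2 = γ * (α * ‖z₁ t - zs‖ ^ 2) := by ring
      _ ≤ γ * (L (z₁ t) - L zs) := by
        exact mul_le_mul_of_nonneg_left this (le_of_lt hγ)
  have h1 : min (α * γ) (1 / 2) * ‖z₁ t - zs‖ ^ 2 ≤ α * γ * ‖z₁ t - zs‖ ^ 2 :=
    mul_le_mul_of_nonneg_right (min_le_left _ _) (by positivity)
  have h2 : min (α * γ) (1 / 2) * ‖z₂ t‖ ^ 2 ≤ (1 / 2) * ‖z₂ t‖ ^ 2 :=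
    mul_le_mul_of_nonneg_right (min_le_right _ _) (by positivity)
  have hVt' : γ * (L (z₁ t) - L zs) + (1 / 2) * ‖z₂ t‖ ^ 2
      ≤ γ * (L (z₁ 0) - L zs) + (1 / 2) * ‖z₂ 0‖ ^ 2 := hVt
  nlinarith [hq, h1, h2, hVt']
end
end

section
/- Global attractivity of the minimizer for the heavy ball method: every solution of the heavy ball system converges to the minimizer with zero velocity, i.e. lim_{t→∞} z₁(t) = z₁* and lim_{t→∞} z₂(t) = 0. -/
open scoped RealInnerProductSpace

noncomputable section

lemma convex_grad_ineq {n : ℕ} {L : EuclideanSpace ℝ (Fin n) → ℝ}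
    (hC1 : ContDiff ℝ 1 L) (hconv : ConvexOn ℝ Set.univ L)
    (zs z : EuclideanSpace ℝ (Fin n)) :
    L z - L zs ≤ ⟪gradient L z, z - zs⟫ := by
  have hdiff : Differentiable ℝ L := hC1.differentiable one_ne_zero
  set φ : ℝ → ℝ := fun s => L (s • (z - zs) + zs) with hφ
  have hcurve : ∀ s : ℝ, HasDerivAt (fun s : ℝ => s • (z - zs) + zs) (z - zs) s := by
    intro s
    simpa using ((hasDerivAt_id s).smul_const (z - zs)).add_const zs
  have hder : ∀ s : ℝ,
      HasDerivAt φ ⟪gradient L (s • (z - zs) + zs), z - zs⟫ s := by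
    intro s
    have h1 : HasFDerivAt L
        ((InnerProductSpace.toDual ℝ _) (gradient L (s • (z - zs) + zs)))
        (s • (z - zs) + zs) :=
      (hdiff _).hasGradientAt.hasFDerivAt
    have h := h1.comp_hasDerivAt s (hcurve s)
    rw [InnerProductSpace.toDual_apply_apply] at h
    exact h
  have hφconv : ConvexOn ℝ Set.univ φ := by
    have h := hconv.comp_affineMap (AffineMap.lineMap zs z)
    simp only [Set.preimage_univ] at h
    exact h
  have hslope := hφconv.slope_le_of_hasDerivAt (Set.mem_univ (0:ℝ)) (Set.mem_univ 1)
    one_pos (hder 1)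
  simp only [slope_def_field, φ, one_smul, zero_smul, zero_add, sub_zero, div_one,
    sub_add_cancel] at hslope
  simpa using hslope

private lemma heavyBall_scalar_ineq (α γ lam c ε a X V P G : ℝ)
    (hα : 0 < α) (hγ : 0 < γ) (hlam : 0 < lam) (hε0 : 0 < ε) (hc0 : 0 < c)
    (ha0 : 0 ≤ a) (hGa : a ≤ G) (hXa : α * X^2 ≤ a)
    (hPabs : -(X*V) ≤ P ∧ P ≤ X*V)
    (hε3 : ε * (2*(γ*α) + lam^2) ≤ lam*(γ*α))
    (hcB : c * (1+ε) ≤ lam) (hcA : c * (2*(γ*α) + ε) ≤ ε*(γ*α)) :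
    (-((lam - ε) * V^2) - ε*lam*P - ε*γ*G) + c * (γ * a + V^2/2 + ε * P) ≤ 0 := by
  have hγα : (0:ℝ) < γ * α := mul_pos hγ hα
  have h1' : 2*(γ*α)*(lam*(X*V)) ≤ (γ*α)^2*X^2 + lam^2*V^2 := by
    nlinarith [sq_nonneg (γ*α*X - lam*V)]
  have q1' : ε*(2*(γ*α)*(lam*(X*V))) ≤ ε*((γ*α)^2*X^2 + lam^2*V^2) :=
    mul_le_mul_of_nonneg_left h1' hε0.le
  have q2' : (2*(γ*α)*(ε*lam))*(-P) ≤ (2*(γ*α)*(ε*lam))*(X*V) := by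
    apply mul_le_mul_of_nonneg_left _ (by positivity)
    linarith [hPabs.1]
  have q3' : (ε*(γ^2*α))*(α*X^2) ≤ (ε*(γ^2*α))*a :=
    mul_le_mul_of_nonneg_left hXa (by positivity)
  have q4' : (ε*(2*(γ*α) + lam^2))*V^2 ≤ (lam*(γ*α))*V^2 :=
    mul_le_mul_of_nonneg_right hε3 (sq_nonneg V)
  have q5' : (2*(ε*(γ^2*α)))*a ≤ (2*(ε*(γ^2*α)))*G :=
    mul_le_mul_of_nonneg_left hGa (by positivity)
  have q6' : (2*(γ*α)*(c*ε))*P ≤ (2*(γ*α)*(c*ε))*(X*V) :=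
    mul_le_mul_of_nonneg_left hPabs.2 (by positivity)
  have h2xy : 2*(X*V) ≤ X^2 + V^2 := by nlinarith [sq_nonneg (X - V)]
  have q7' : (2*(γ*α)*(c*ε))*(X*V) ≤ (γ*α*(c*ε))*X^2 + (γ*α*(c*ε))*V^2 := by
    have h := mul_le_mul_of_nonneg_left h2xy
      (show (0:ℝ) ≤ γ*α*(c*ε) by positivity)
    nlinarith [h]
  have q8' : (γ*(c*ε))*(α*X^2) ≤ (γ*(c*ε))*a :=
    mul_le_mul_of_nonneg_left hXa (by positivity)
  have q9' : (γ*a)*(c*(2*(γ*α) + ε)) ≤ (γ*a)*(ε*(γ*α)) :=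
    mul_le_mul_of_nonneg_left hcA (by positivity)
  have q10' : (γ*α*V^2)*(c*(1+ε)) ≤ (γ*α*V^2)*lam :=
    mul_le_mul_of_nonneg_left hcB (by positivity)
  have hbig : 2*(γ*α)*((-((lam - ε) * V^2) - ε*lam*P - ε*γ*G)
      + c * (γ * a + V^2/2 + ε * P)) ≤ 2*(γ*α)*0 := by
    rw [mul_zero]
    linarith [q1', q2', q3', q4', q5', q6', q7', q8', q9', q10']
  exact le_of_mul_le_mul_left hbig (by positivity)

/-- Global attractivity of the minimizer for the heavy ball method:
`z₁(t) → z₁*` and `z₂(t) → 0` as `t → ∞`. -/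
theorem heavyBall_global_attractivity {n : ℕ} (hn : 1 ≤ n)
    (L : EuclideanSpace ℝ (Fin n) → ℝ)
    (hC1 : ContDiff ℝ 1 L)
    (hconv : ConvexOn ℝ Set.univ L)
    (zs : EuclideanSpace ℝ (Fin n))
    (hmin : ∀ z, L zs ≤ L z)
    (huniq : ∀ z, (∀ y, L z ≤ L y) → z = zs)
    (α : ℝ) (hα : 0 < α)
    (hQG : ∀ z, α * ‖z - zs‖ ^ 2 ≤ L z - L zs)
    (M : ℝ) (hM : 0 < M)
    (hLip : ∀ w u, ‖gradient L w - gradient L u‖ ≤ M * ‖w - u‖)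
    (lam γ : ℝ) (hlam : 0 < lam) (hγ : 0 < γ)
    (z₁ z₂ : ℝ → EuclideanSpace ℝ (Fin n))
    (hz₁ : ∀ t, 0 ≤ t → HasDerivAt z₁ (z₂ t) t)
    (hz₂ : ∀ t, 0 ≤ t →
      HasDerivAt z₂ (-(lam • z₂ t) - γ • gradient L (z₁ t)) t) :
    Filter.Tendsto z₁ Filter.atTop (nhds zs) ∧
    Filter.Tendsto z₂ Filter.atTop (nhds 0) := by
  have hdiff : Differentiable ℝ L := hC1.differentiable one_ne_zero
  have hγα : (0:ℝ) < γ * α := mul_pos hγ hα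
  -- the constant ε for the cross term
  set ε : ℝ := min (min (γ*α) (1/2)) ((lam*(γ*α))/(2*(γ*α) + lam^2)) with hεdef
  have hε0 : 0 < ε := by
    apply lt_min (lt_min hγα (by norm_num))
    positivity
  have hε1 : ε ≤ γ*α := le_trans (min_le_left _ _) (min_le_left _ _)
  have hε2 : ε ≤ 1/2 := le_trans (min_le_left _ _) (min_le_right _ _)
  have hε3 : ε * (2*(γ*α) + lam^2) ≤ lam*(γ*α) := by
    have h := min_le_right (min (γ*α) (1/2)) ((lam*(γ*α))/(2*(γ*α) + lam^2))
    have hden : (0:ℝ) < 2*(γ*α) + lam^2 := by positivity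
    calc ε * (2*(γ*α) + lam^2)
        ≤ ((lam*(γ*α))/(2*(γ*α) + lam^2)) * (2*(γ*α) + lam^2) :=
          mul_le_mul_of_nonneg_right h hden.le
      _ = lam*(γ*α) := div_mul_cancel₀ _ hden.ne'
  -- the decay rate c
  set c : ℝ := min (lam/(1+ε)) ((ε*(γ*α))/(2*(γ*α) + ε)) with hcdef
  have hc0 : 0 < c := by
    apply lt_min (by positivity) (by positivity)
  have hcB : c * (1+ε) ≤ lam := by
    have h := min_le_left (lam/(1+ε)) ((ε*(γ*α))/(2*(γ*α) + ε))
    have hden : (0:ℝ) < 1 + ε := by positivity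
    calc c * (1+ε) ≤ (lam/(1+ε)) * (1+ε) := mul_le_mul_of_nonneg_right h hden.le
      _ = lam := div_mul_cancel₀ _ hden.ne'
  have hcA : c * (2*(γ*α) + ε) ≤ ε*(γ*α) := by
    have h := min_le_right (lam/(1+ε)) ((ε*(γ*α))/(2*(γ*α) + ε))
    have hden : (0:ℝ) < 2*(γ*α) + ε := by positivity
    calc c * (2*(γ*α) + ε)
        ≤ ((ε*(γ*α))/(2*(γ*α) + ε)) * (2*(γ*α) + ε) := mul_le_mul_of_nonneg_right h hden.le
      _ = ε*(γ*α) := div_mul_cancel₀ _ hden.ne'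
  clear hεdef hcdef
  clear_value ε c
  -- Lyapunov function
  set E : ℝ → ℝ := fun t => γ * (L (z₁ t) - L zs) + ⟪z₂ t, z₂ t⟫/2
      + ε * ⟪z₁ t - zs, z₂ t⟫ with hEdef
  set Φ : ℝ → ℝ := fun t => -((lam - ε) * ⟪z₂ t, z₂ t⟫) - ε*lam*⟪z₁ t - zs, z₂ t⟫
      - ε*γ*⟪gradient L (z₁ t), z₁ t - zs⟫ with hΦdef
  have hE : ∀ t, 0 ≤ t → HasDerivAt E (Φ t) t := by
    intro t ht
    have h1 := hz₁ t ht
    have h2 := hz₂ t ht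
    have hL' : HasDerivAt (fun s => L (z₁ s)) ⟪gradient L (z₁ t), z₂ t⟫ t := by
      have hF : HasFDerivAt L
          ((InnerProductSpace.toDual ℝ _) (gradient L (z₁ t))) (z₁ t) :=
        (hdiff _).hasGradientAt.hasFDerivAt
      have h := hF.comp_hasDerivAt t h1
      rw [InnerProductSpace.toDual_apply_apply] at h
      exact h
    have hx : HasDerivAt (fun s => z₁ s - zs) (z₂ t) t := h1.sub_const zs
    have d1 : HasDerivAt (fun s => γ * (L (z₁ s) - L zs))
        (γ * ⟪gradient L (z₁ t), z₂ t⟫) t := (hL'.sub_const (L zs)).const_mul γ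
    have d2 : HasDerivAt (fun s => ⟪z₂ s, z₂ s⟫/2)
        ((⟪z₂ t, -(lam • z₂ t) - γ • gradient L (z₁ t)⟫
          + ⟪-(lam • z₂ t) - γ • gradient L (z₁ t), z₂ t⟫)/2) t :=
      (h2.inner ℝ h2).div_const 2
    have d3 : HasDerivAt (fun s => ε * ⟪z₁ s - zs, z₂ s⟫)
        (ε * (⟪z₁ t - zs, -(lam • z₂ t) - γ • gradient L (z₁ t)⟫
          + ⟪z₂ t, z₂ t⟫)) t := (hx.inner ℝ h2).const_mul ε
    have hsum := (d1.add d2).add d3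
    convert (show HasDerivAt E _ t from hsum) using 1
    simp only [hΦdef, inner_sub_right, inner_sub_left, inner_neg_right, inner_neg_left,
      real_inner_smul_right, real_inner_smul_left]
    rw [real_inner_comm (z₂ t) (gradient L (z₁ t)),
      real_inner_comm (z₁ t) (gradient L (z₁ t)),
      real_inner_comm zs (gradient L (z₁ t))]
    ring
  -- the key differential inequality
  have hkey : ∀ t, 0 ≤ t → Φ t + c * E t ≤ 0 := by
    intro t ht
    have ha0 : 0 ≤ L (z₁ t) - L zs := sub_nonneg.2 (hmin _)
    have hGa : L (z₁ t) - L zs ≤ ⟪gradient L (z₁ t), z₁ t - zs⟫ :=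
      convex_grad_ineq hC1 hconv zs (z₁ t)
    have hXa : α * ‖z₁ t - zs‖^2 ≤ L (z₁ t) - L zs := hQG (z₁ t)
    have hPabs := abs_le.1 (abs_real_inner_le_norm (z₁ t - zs) (z₂ t))
    have hvv : ⟪z₂ t, z₂ t⟫ = ‖z₂ t‖^2 := real_inner_self_eq_norm_sq _
    obtain ⟨a, ha⟩ : ∃ a, L (z₁ t) - L zs = a := ⟨_, rfl⟩
    obtain ⟨X, hX⟩ : ∃ X, ‖z₁ t - zs‖ = X := ⟨_, rfl⟩
    obtain ⟨V, hV⟩ : ∃ V, ‖z₂ t‖ = V := ⟨_, rfl⟩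
    obtain ⟨P, hP⟩ : ∃ P : ℝ, ⟪z₁ t - zs, z₂ t⟫ = P := ⟨_, rfl⟩
    obtain ⟨G, hG⟩ : ∃ G : ℝ, ⟪gradient L (z₁ t), z₁ t - zs⟫ = G := ⟨_, rfl⟩
    rw [ha] at ha0
    rw [ha, hG] at hGa
    rw [hX, ha] at hXa
    rw [hP, hX, hV] at hPabs
    rw [hV] at hvv
    have hΦt : Φ t = -((lam - ε) * V^2) - ε*lam*P - ε*γ*G := by
      simp only [hΦdef]; rw [hvv, hP, hG]
    have hEt : E t = γ * a + V^2/2 + ε * P := by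
      simp only [hEdef]; rw [hvv, hP, ha]
    rw [hΦt, hEt]
    exact heavyBall_scalar_ineq α γ lam c ε a X V P G hα hγ hlam hε0 hc0
      ha0 hGa hXa hPabs hε3 hcB hcA
  -- Gronwall: W t = E t * exp (c t) is antitone on [0, ∞)
  set W : ℝ → ℝ := fun t => E t * Real.exp (c*t) with hWdef
  have hW : ∀ t, 0 ≤ t → HasDerivAt W ((Φ t + c * E t) * Real.exp (c*t)) t := by
    intro t ht
    have h2 : HasDerivAt (fun s : ℝ => Real.exp (c*s)) (c * Real.exp (c*t)) t := by
      have h := (Real.hasDerivAt_exp (c*t)).comp t ((hasDerivAt_id t).const_mul c)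
      simp only [Function.comp_def, mul_one] at h
      rw [mul_comm]
      exact h
    have := (hE t ht).mul h2
    convert (show HasDerivAt W _ t from this) using 1
    ring
  have hanti : AntitoneOn W (Set.Ici 0) := by
    apply antitoneOn_of_hasDerivWithinAt_nonpos (convex_Ici 0)
      (f' := fun t => (Φ t + c * E t) * Real.exp (c*t))
    · intro t ht
      exact ((hW t ht).continuousAt).continuousWithinAt
    · intro t ht
      rw [interior_Ici] at ht
      exact (hW t (le_of_lt ht)).hasDerivWithinAt
    · intro t ht
      rw [interior_Ici] at ht
      exact mul_nonpos_of_nonpos_of_nonneg (hkey t (le_of_lt ht)) (Real.exp_pos _).le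
  have hEbound : ∀ t, 0 ≤ t → E t ≤ E 0 * Real.exp (-(c*t)) := by
    intro t ht
    have h := hanti Set.self_mem_Ici ht ht
    have hW0 : W 0 = E 0 := by simp [hWdef]
    rw [hW0] at h
    rw [Real.exp_neg, mul_comm (E 0), ← div_eq_inv_mul]
    rw [le_div_iff₀ (Real.exp_pos _)]
    exact h
  -- lower bound on E
  have hElow : ∀ t, (γ*α/2)*‖z₁ t - zs‖^2 + ‖z₂ t‖^2/4 ≤ E t := by
    intro t
    have hXa : α * ‖z₁ t - zs‖^2 ≤ L (z₁ t) - L zs := hQG (z₁ t)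
    have hPabs := abs_le.1 (abs_real_inner_le_norm (z₁ t - zs) (z₂ t))
    have hvv : ⟪z₂ t, z₂ t⟫ = ‖z₂ t‖^2 := real_inner_self_eq_norm_sq _
    obtain ⟨a, ha⟩ : ∃ a, L (z₁ t) - L zs = a := ⟨_, rfl⟩
    obtain ⟨X, hX⟩ : ∃ X, ‖z₁ t - zs‖ = X := ⟨_, rfl⟩
    obtain ⟨V, hV⟩ : ∃ V, ‖z₂ t‖ = V := ⟨_, rfl⟩
    obtain ⟨P, hP⟩ : ∃ P : ℝ, ⟪z₁ t - zs, z₂ t⟫ = P := ⟨_, rfl⟩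
    rw [hX, ha] at hXa
    rw [hP, hX, hV] at hPabs
    have r1 : ε*(X*V) ≤ ε*(X^2/2 + V^2/2) := by
      apply mul_le_mul_of_nonneg_left _ hε0.le
      nlinarith [sq_nonneg (X - V)]
    have r2 : ε*(-P) ≤ ε*(X*V) := mul_le_mul_of_nonneg_left (by linarith [hPabs.1]) hε0.le
    have r3 : ε*(X^2/2) ≤ (γ*α)*(X^2/2) := mul_le_mul_of_nonneg_right hε1 (by positivity)
    have r4 : ε*(V^2/2) ≤ (1/2)*(V^2/2) := mul_le_mul_of_nonneg_right hε2 (by positivity)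
    have r5 : γ*(α*X^2) ≤ γ*a := mul_le_mul_of_nonneg_left hXa hγ.le
    have hEt : E t = γ * a + V^2/2 + ε * P := by
      simp only [hEdef]; rw [hvv, hV, hP, ha]
    rw [hEt, hX, hV]
    linarith
  clear hEdef hΦdef hWdef hW hanti hE hkey
  clear_value E Φ W
  clear Φ W
  -- the exponential bound tends to 0
  have hExp0 : Filter.Tendsto (fun t => E 0 * Real.exp (-(c*t)))
      Filter.atTop (nhds 0) := by
    have h1 : Filter.Tendsto (fun t : ℝ => c*t) Filter.atTop Filter.atTop :=
      Filter.Tendsto.const_mul_atTop hc0 Filter.tendsto_id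
    have h2 : Filter.Tendsto (fun t : ℝ => Real.exp (-(c*t))) Filter.atTop (nhds 0) :=
      Real.tendsto_exp_neg_atTop_nhds_zero.comp h1
    simpa using h2.const_mul (E 0)
  -- squeeze for the squared norms
  have hsq1 : Filter.Tendsto (fun t => ‖z₁ t - zs‖^2) Filter.atTop (nhds 0) := by
    refine squeeze_zero' (g := fun t => (E 0 * Real.exp (-(c*t))) * (2/(γ*α)))
      (Filter.Eventually.of_forall fun t => sq_nonneg _) ?_ ?_
    · filter_upwards [Filter.eventually_ge_atTop (0:ℝ)] with t ht
      have h1 := hElow t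
      have h2 := hEbound t ht
      have h3 : (γ*α/2)*‖z₁ t - zs‖^2 ≤ E 0 * Real.exp (-(c*t)) := by
        nlinarith [sq_nonneg ‖z₂ t‖]
      calc ‖z₁ t - zs‖^2 = ((γ*α/2)*‖z₁ t - zs‖^2) * (2/(γ*α)) := by
            field_simp
        _ ≤ (E 0 * Real.exp (-(c*t))) * (2/(γ*α)) :=
            mul_le_mul_of_nonneg_right h3 (by positivity)
    · simpa using hExp0.mul_const (2/(γ*α))
  have hsq2 : Filter.Tendsto (fun t => ‖z₂ t‖^2) Filter.atTop (nhds 0) := by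
    refine squeeze_zero' (g := fun t => (E 0 * Real.exp (-(c*t))) * 4)
      (Filter.Eventually.of_forall fun t => sq_nonneg _) ?_ ?_
    · filter_upwards [Filter.eventually_ge_atTop (0:ℝ)] with t ht
      have h1 := hElow t
      have h2 := hEbound t ht
      have h4 : 0 ≤ (γ*α/2)*‖z₁ t - zs‖^2 := by positivity
      linarith
    · simpa using hExp0.mul_const (4:ℝ)
  -- convert squared convergence to norm convergence
  have hn1 : Filter.Tendsto (fun t => ‖z₁ t - zs‖) Filter.atTop (nhds 0) := by
    have h := (Real.continuous_sqrt.tendsto 0).comp hsq1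
    have heq : (fun t => Real.sqrt (‖z₁ t - zs‖^2)) = fun t => ‖z₁ t - zs‖ :=
      funext fun t => Real.sqrt_sq (norm_nonneg _)
    rw [Function.comp_def, heq] at h
    simpa using h
  have hn2 : Filter.Tendsto (fun t => ‖z₂ t‖) Filter.atTop (nhds 0) := by
    have h := (Real.continuous_sqrt.tendsto 0).comp hsq2
    have heq : (fun t => Real.sqrt (‖z₂ t‖^2)) = fun t => ‖z₂ t‖ :=
      funext fun t => Real.sqrt_sq (norm_nonneg _)
    rw [Function.comp_def, heq] at h
    simpa using h
  constructor
  · rw [tendsto_iff_norm_sub_tendsto_zero]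
    exact hn1
  · rw [tendsto_zero_iff_norm_tendsto_zero]
    exact hn2
end
end

section
/- Exponential convergence rate of the heavy ball method under quadratic growth: let m ∈ (0,1), set ψ := mαγ/λ, assume ψ < λ (so that ν := ψ(ψ - λ) < 0), and set κ := min{(1 - m)ψ, 2(λ - ψ)} > 0. Then every solution of the heavy ball system satisfies V(z₁(t), z₂(t)) ≤ V(z₁(0), z₂(0))·e^{-κ t} for all t ≥ 0, and consequently L(z₁(t)) - L* ≤ (V(z₁(0), z₂(0)) / ((1 - m)γ))·e^{-κ t} for all t ≥ 0. -/
open scoped RealInnerProductSpace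

noncomputable section

/-- First-order condition for a differentiable convex function. -/
lemma hb_convex_grad {F : Type*} [NormedAddCommGroup F] [InnerProductSpace ℝ F]
    [CompleteSpace F] {L : F → ℝ} (hd : Differentiable ℝ L)
    (hconv : ConvexOn ℝ Set.univ L) (x y : F) :
    L x - L y ≤ ⟪gradient L x, x - y⟫ := by
  have hF : HasFDerivAt L (InnerProductSpace.toDual ℝ F (gradient L x)) x :=
    hasGradientAt_iff_hasFDerivAt.mp (hd x).hasGradientAt
  have hu : HasDerivAt (fun s : ℝ => x + s • (y - x)) (y - x) 0 := by
    simpa using ((hasDerivAt_id (0 : ℝ)).smul_const (y - x)).const_add x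
  have h0 : x + (0 : ℝ) • (y - x) = x := by simp
  have hF' : HasFDerivAt L (InnerProductSpace.toDual ℝ F (gradient L x))
      (x + (0 : ℝ) • (y - x)) := by rw [h0]; exact hF
  have hh : HasDerivAt (fun s : ℝ => L (x + s • (y - x)))
      (⟪gradient L x, y - x⟫) 0 := by
    simpa [Function.comp_def, InnerProductSpace.toDual_apply_apply] using
      HasFDerivAt.comp_hasDerivAt (x := (0:ℝ)) (f := fun s : ℝ => x + s • (y - x)) hF' hu
  have hslope : ∀ s ∈ Set.Ioc (0 : ℝ) 1,
      slope (fun s : ℝ => L (x + s • (y - x))) 0 s ≤ L y - L x := by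
    intro s hs
    have hcvx := hconv.2 (Set.mem_univ x) (Set.mem_univ y)
      (by linarith [hs.2] : (0:ℝ) ≤ 1 - s) hs.1.le (by ring)
    have hpt : (1 - s) • x + s • y = x + s • (y - x) := by module
    rw [hpt] at hcvx
    have hs0 : (0:ℝ) < s := hs.1
    rw [slope_def_field, h0, sub_zero, div_le_iff₀ hs0]
    have : L (x + s • (y - x)) ≤ (1 - s) * L x + s * L y := by
      simpa [smul_eq_mul] using hcvx
    nlinarith
  have htend : Filter.Tendsto (slope (fun s : ℝ => L (x + s • (y - x))) 0)
      (nhdsWithin 0 (Set.Ioi 0)) (nhds (⟪gradient L x, y - x⟫)) :=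
    (hasDerivAt_iff_tendsto_slope.mp hh).mono_left
      (nhdsWithin_mono 0 (fun s hs => ne_of_gt hs))
  have hle : ⟪gradient L x, y - x⟫ ≤ L y - L x :=
    le_of_tendsto htend (Filter.eventually_of_mem
      (Ioc_mem_nhdsGT_of_mem ⟨le_refl 0, one_pos⟩) hslope)
  have hflip : ⟪gradient L x, x - y⟫ = -⟪gradient L x, y - x⟫ := by
    rw [← inner_neg_right, neg_sub]
  linarith [hflip.ge, hflip.le]

lemma hb_scalar (ψ lam κ γ α m P G a2 b2 d : ℝ)
    (hψ : 0 < ψ) (hψlam : ψ < lam) (hγ : 0 < γ) (hα : 0 < α)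
    (hm0 : 0 < m) (hm1 : m < 1)
    (hκ1 : κ ≤ (1 - m) * ψ) (hκ2 : κ ≤ 2 * (lam - ψ)) (hκ0 : 0 < κ)
    (hmαγ : m * α * γ = ψ * lam)
    (ha2 : 0 ≤ a2) (hW : 0 ≤ ψ ^ 2 * a2 + 2 * ψ * d + b2)
    (hP : α * a2 ≤ P) (hG : P ≤ G) :
    (-(ψ * γ) * G + (ψ - lam) * b2 + 2 * ψ * (ψ - lam) * d)
      + κ * (γ * P + (1 / 2) * (ψ ^ 2 * a2 + 2 * ψ * d + b2)
          + (ψ * (ψ - lam) / 2) * a2) ≤ 0 := by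
  have hPnn : 0 ≤ P := le_trans (mul_nonneg hα.le ha2) hP
  have h1 : 0 ≤ ((1 - m) * ψ - κ) * (γ * P) :=
    mul_nonneg (by linarith) (mul_nonneg hγ.le hPnn)
  have h2 : 0 ≤ (lam - ψ - κ / 2) * (ψ ^ 2 * a2 + 2 * ψ * d + b2) :=
    mul_nonneg (by linarith) hW
  have h3 : ψ * (ψ * lam) * a2 ≤ m * ψ * γ * G := by
    have e : m * ψ * γ * (α * a2) = ψ * (ψ * lam) * a2 := by
      rw [← hmαγ]; ring
    have := mul_le_mul_of_nonneg_left (le_trans hP hG)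
      (by positivity : (0:ℝ) ≤ m * ψ * γ)
    linarith [e ▸ this]
  have h4 : 0 ≤ ((1 - m) * ψ * γ) * (G - P) :=
    mul_nonneg (mul_nonneg (mul_nonneg (by linarith) hψ.le) hγ.le) (by linarith)
  have h5 : 0 ≤ κ * ψ * (lam - ψ) / 2 * a2 := by
    have h' : 0 ≤ κ * ψ * (lam - ψ) * a2 :=
      mul_nonneg (mul_nonneg (mul_nonneg hκ0.le hψ.le) (by linarith)) ha2
    linarith
  have h6 : 0 ≤ ψ ^ 3 * a2 := by positivity
  nlinarith [h1, h2, h3, h4, h5, h6]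
/-- Exponential convergence of the heavy ball method under quadratic growth:
with `ψ = mαγ/λ < λ` and `κ = min{(1-m)ψ, 2(λ-ψ)}`, every solution satisfies
`V(z(t)) ≤ V(z(0)) e^{-κt}` and `L(z₁(t)) - L* ≤ (V(z(0))/((1-m)γ)) e^{-κt}`. -/
theorem heavyBall_exponential_rate {n : ℕ} (hn : 1 ≤ n)
    (L : EuclideanSpace ℝ (Fin n) → ℝ)
    (hC1 : ContDiff ℝ 1 L)
    (hconv : ConvexOn ℝ Set.univ L)
    (zs : EuclideanSpace ℝ (Fin n))
    (hmin : ∀ z, L zs ≤ L z)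
    (huniq : ∀ z, (∀ y, L z ≤ L y) → z = zs)
    (α : ℝ) (hα : 0 < α)
    (hQG : ∀ z, α * ‖z - zs‖ ^ 2 ≤ L z - L zs)
    (lam γ m : ℝ) (hlam : 0 < lam) (hγ : 0 < γ) (hm0 : 0 < m) (hm1 : m < 1)
    (hψlt : m * α * γ / lam < lam)
    (z₁ z₂ : ℝ → EuclideanSpace ℝ (Fin n))
    (hz₁ : ∀ t, 0 ≤ t → HasDerivAt z₁ (z₂ t) t)
    (hz₂ : ∀ t, 0 ≤ t →
      HasDerivAt z₂ (-(lam • z₂ t) - γ • gradient L (z₁ t)) t) :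
    ∀ t, 0 ≤ t →
      (γ * (L (z₁ t) - L zs)
          + (1 / 2) * ‖(m * α * γ / lam) • (z₁ t - zs) + z₂ t‖ ^ 2
          + ((m * α * γ / lam) * ((m * α * γ / lam) - lam) / 2)
              * ‖z₁ t - zs‖ ^ 2)
        ≤ (γ * (L (z₁ 0) - L zs)
            + (1 / 2) * ‖(m * α * γ / lam) • (z₁ 0 - zs) + z₂ 0‖ ^ 2
            + ((m * α * γ / lam) * ((m * α * γ / lam) - lam) / 2)
                * ‖z₁ 0 - zs‖ ^ 2)
          * Real.exp
              (-(min ((1 - m) * (m * α * γ / lam)) (2 * (lam - m * α * γ / lam)))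
                * t) ∧
      L (z₁ t) - L zs
        ≤ ((γ * (L (z₁ 0) - L zs)
            + (1 / 2) * ‖(m * α * γ / lam) • (z₁ 0 - zs) + z₂ 0‖ ^ 2
            + ((m * α * γ / lam) * ((m * α * γ / lam) - lam) / 2)
                * ‖z₁ 0 - zs‖ ^ 2) / ((1 - m) * γ))
          * Real.exp
              (-(min ((1 - m) * (m * α * γ / lam)) (2 * (lam - m * α * γ / lam)))
                * t) := by
  have hdiff : Differentiable ℝ L := hC1.differentiable one_ne_zero
  set ψ : ℝ := m * α * γ / lam with hψdef
  have hψpos : 0 < ψ := by rw [hψdef]; positivity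
  have hψlam : ψ < lam := hψlt
  have hmαγ : m * α * γ = ψ * lam := by
    rw [hψdef]; field_simp
  set κ : ℝ := min ((1 - m) * ψ) (2 * (lam - ψ)) with hκdef
  have hκ0 : 0 < κ := lt_min (by nlinarith) (by nlinarith)
  have hκ1 : κ ≤ (1 - m) * ψ := min_le_left _ _
  have hκ2 : κ ≤ 2 * (lam - ψ) := min_le_right _ _
  set V : ℝ → ℝ := fun s => γ * (L (z₁ s) - L zs)
      + (1 / 2) * ‖ψ • (z₁ s - zs) + z₂ s‖ ^ 2
      + (ψ * (ψ - lam) / 2) * ‖z₁ s - zs‖ ^ 2 with hVdef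
  set Vd : ℝ → ℝ := fun s => γ * ⟪gradient L (z₁ s), z₂ s⟫
      + ⟪ψ • (z₁ s - zs) + z₂ s, ψ • z₂ s + (-(lam • z₂ s) - γ • gradient L (z₁ s))⟫
      + ψ * (ψ - lam) * ⟪z₁ s - zs, z₂ s⟫ with hVddef
  have hVderiv : ∀ t, 0 ≤ t → HasDerivAt V (Vd t) t := by
    intro t ht
    have hF : HasFDerivAt L (InnerProductSpace.toDual ℝ _ (gradient L (z₁ t))) (z₁ t) :=
      hasGradientAt_iff_hasFDerivAt.mp (hdiff (z₁ t)).hasGradientAt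
    have h1 : HasDerivAt (fun s => L (z₁ s)) (⟪gradient L (z₁ t), z₂ t⟫) t := by
      simpa [Function.comp_def, InnerProductSpace.toDual_apply_apply] using
        HasFDerivAt.comp_hasDerivAt (x := t) (f := z₁) hF (hz₁ t ht)
    have h1' : HasDerivAt (fun s => γ * (L (z₁ s) - L zs))
        (γ * ⟪gradient L (z₁ t), z₂ t⟫) t := (h1.sub_const (L zs)).const_mul γ
    have h2 : HasDerivAt (fun s => ψ • (z₁ s - zs) + z₂ s)
        (ψ • z₂ t + (-(lam • z₂ t) - γ • gradient L (z₁ t))) t :=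
      (((hz₁ t ht).sub_const zs).const_smul ψ).add (hz₂ t ht)
    have h2' : HasDerivAt (fun s => (1 / 2) * ‖ψ • (z₁ s - zs) + z₂ s‖ ^ 2)
        (⟪ψ • (z₁ t - zs) + z₂ t, ψ • z₂ t + (-(lam • z₂ t) - γ • gradient L (z₁ t))⟫) t := by
      have h := h2.norm_sq.const_mul (1 / 2 : ℝ)
      exact h.congr_deriv (by ring)
    have h3' : HasDerivAt (fun s => (ψ * (ψ - lam) / 2) * ‖z₁ s - zs‖ ^ 2)
        (ψ * (ψ - lam) * ⟪z₁ t - zs, z₂ t⟫) t := by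
      have h := ((hz₁ t ht).sub_const zs).norm_sq.const_mul (ψ * (ψ - lam) / 2 : ℝ)
      exact h.congr_deriv (by ring)
    exact (h1'.add h2').add h3'
  have hVd_le : ∀ t, 0 ≤ t → Vd t + κ * V t ≤ 0 := by
    intro t ht
    have e1 : ⟪ψ • (z₁ t - zs) + z₂ t, ψ • z₂ t + (-(lam • z₂ t) - γ • gradient L (z₁ t))⟫
        = ψ * ψ * ⟪z₁ t - zs, z₂ t⟫ - ψ * lam * ⟪z₁ t - zs, z₂ t⟫
          - ψ * γ * ⟪z₁ t - zs, gradient L (z₁ t)⟫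
          + ψ * ‖z₂ t‖ ^ 2 - lam * ‖z₂ t‖ ^ 2 - γ * ⟪z₂ t, gradient L (z₁ t)⟫ := by
      simp only [inner_add_left, inner_add_right, inner_sub_right, inner_neg_right,
        real_inner_smul_left, real_inner_smul_right, real_inner_self_eq_norm_sq]
      ring
    have e2 : ⟪gradient L (z₁ t), z₂ t⟫ = ⟪z₂ t, gradient L (z₁ t)⟫ := real_inner_comm _ _
    have e3 : ‖ψ • (z₁ t - zs) + z₂ t‖ ^ 2
        = ψ ^ 2 * ‖z₁ t - zs‖ ^ 2 + 2 * ψ * ⟪z₁ t - zs, z₂ t⟫ + ‖z₂ t‖ ^ 2 := by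
      rw [norm_add_sq_real, norm_smul, real_inner_smul_left]
      rw [Real.norm_eq_abs, abs_of_pos hψpos]
      ring
    have hG : L (z₁ t) - L zs ≤ ⟪z₁ t - zs, gradient L (z₁ t)⟫ := by
      have := hb_convex_grad hdiff hconv (z₁ t) zs
      rwa [real_inner_comm] at this
    have hP := hQG (z₁ t)
    have hWnn : 0 ≤ ψ ^ 2 * ‖z₁ t - zs‖ ^ 2 + 2 * ψ * ⟪z₁ t - zs, z₂ t⟫ + ‖z₂ t‖ ^ 2 := by
      rw [← e3]; positivity
    have key := hb_scalar ψ lam κ γ α m (L (z₁ t) - L zs)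
      (⟪z₁ t - zs, gradient L (z₁ t)⟫) (‖z₁ t - zs‖ ^ 2) (‖z₂ t‖ ^ 2)
      (⟪z₁ t - zs, z₂ t⟫) hψpos hψlam hγ hα hm0 hm1 hκ1 hκ2 hκ0 hmαγ
      (by positivity) hWnn hP hG
    simp only [hVdef, hVddef]
    rw [e1, e2, e3]
    linarith
  set Gf : ℝ → ℝ := fun s => V s * Real.exp (κ * s) with hGdef
  have hGderiv : ∀ t, 0 ≤ t →
      HasDerivAt Gf ((Vd t + κ * V t) * Real.exp (κ * t)) t := by
    intro t ht
    have hid : HasDerivAt (fun s : ℝ => κ * s) κ t := by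
      simpa using (hasDerivAt_id t).const_mul κ
    have he : HasDerivAt (fun s : ℝ => Real.exp (κ * s)) (Real.exp (κ * t) * κ) t := by
      simpa [Function.comp_def] using (Real.hasDerivAt_exp (κ * t)).comp t hid
    have h := (hVderiv t ht).mul he
    exact h.congr_deriv (by ring)
  have hanti : AntitoneOn Gf (Set.Ici (0 : ℝ)) := by
    apply antitoneOn_of_deriv_nonpos (convex_Ici 0)
    · intro s hs
      exact ((hGderiv s hs).continuousAt).continuousWithinAt
    · intro s hs
      rw [interior_Ici] at hs
      exact ((hGderiv s (le_of_lt hs)).differentiableAt).differentiableWithinAt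
    · intro s hs
      rw [interior_Ici] at hs
      rw [(hGderiv s hs.le).deriv]
      have h := hVd_le s hs.le
      have := mul_le_mul_of_nonneg_right h (Real.exp_pos (κ * s)).le
      simpa using this
  have key : ∀ t, 0 ≤ t → V t ≤ V 0 * Real.exp (-κ * t) := by
    intro t ht
    have h := hanti Set.self_mem_Ici ht ht
    have h0 : Gf 0 = V 0 := by simp [hGdef]
    have hle : V t * Real.exp (κ * t) ≤ V 0 := by
      rw [← h0]; exact h
    have h2 : V t ≤ V 0 / Real.exp (κ * t) :=
      (le_div_iff₀ (Real.exp_pos _)).mpr hle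
    calc V t ≤ V 0 / Real.exp (κ * t) := h2
      _ = V 0 * Real.exp (-κ * t) := by
          rw [neg_mul, Real.exp_neg, div_eq_mul_inv]
  have hlow : ∀ t, (1 - m) * γ * (L (z₁ t) - L zs) ≤ V t := by
    intro t
    have hP := hQG (z₁ t)
    have hWnn : 0 ≤ ‖ψ • (z₁ t - zs) + z₂ t‖ ^ 2 := by positivity
    have ha2 : 0 ≤ ‖z₁ t - zs‖ ^ 2 := by positivity
    have key0 : m * γ * (α * ‖z₁ t - zs‖ ^ 2) = ψ * lam * ‖z₁ t - zs‖ ^ 2 := by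
      rw [← hmαγ]; ring
    have hstep := mul_le_mul_of_nonneg_left hP
      (by positivity : (0:ℝ) ≤ m * γ)
    have hψ2 : 0 ≤ ψ ^ 2 * ‖z₁ t - zs‖ ^ 2 := by positivity
    have hψl : 0 ≤ ψ * lam * ‖z₁ t - zs‖ ^ 2 := by positivity
    simp only [hVdef]
    nlinarith [hstep, key0, hψ2, hψl, hWnn]
  intro t ht
  constructor
  · have h := key t ht
    simpa [hVdef] using h
  · have h1 := hlow t
    have h2 := key t ht
    have hpos : (0:ℝ) < (1 - m) * γ := mul_pos (by linarith) hγ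
    have h3 : L (z₁ t) - L zs ≤ V 0 * Real.exp (-κ * t) / ((1 - m) * γ) := by
      rw [le_div_iff₀ hpos]
      have hcomm : (L (z₁ t) - L zs) * ((1 - m) * γ)
          = (1 - m) * γ * (L (z₁ t) - L zs) := by ring
      linarith [h1, h2]
    have h4 : V 0 * Real.exp (-κ * t) / ((1 - m) * γ)
        = V 0 / ((1 - m) * γ) * Real.exp (-κ * t) := by ring
    rw [h4] at h3
    simpa [hVdef] using h3
end
end

section
/- Differential inequality for the Nesterov Lyapunov function: set v̄₂(t) := ζ²·(1 - β̄(t)ā(t))·β̄(t). Along every solution of the Nesterov system, for all t ∈ [0,1), d/dt [V₁((z₁(t), z₂(t)), t)] ≤ -ā(t)·V₁((z₁(t), z₂(t)), t) - v̄₂(t)·‖z₂(t)‖², and for all t ≥ 1, d/dt [V₁((z₁(t), z₂(t)), t)] ≤ -ā(t)·V₁((z₁(t), z₂(t)), t). -/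
open scoped RealInnerProductSpace

noncomputable section

/-- First-order condition for a convex differentiable function. -/
lemma convex_first_order {n : ℕ} {L : EuclideanSpace ℝ (Fin n) → ℝ}
    (hconv : ConvexOn ℝ Set.univ L) {x g : EuclideanSpace ℝ (Fin n)}
    (hg : HasGradientAt L g x) (y : EuclideanSpace ℝ (Fin n)) :
    L x + ⟪g, y - x⟫ ≤ L y := by
  set φ : ℝ → ℝ := fun s => L (s • (y - x) + x) with hφdef
  have hφconv : ConvexOn ℝ Set.univ φ := by
    have h := hconv.comp_affineMap
      ((LinearMap.toSpanSingleton ℝ _ (y - x)).toAffineMap + AffineMap.const ℝ ℝ x)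
    exact h
  have hline : HasDerivAt (fun s : ℝ => s • (y - x) + x) (y - x) 0 := by
    simpa using ((hasDerivAt_id (0:ℝ)).smul_const (y - x)).add_const x
  have hF : HasFDerivAt L (InnerProductSpace.toDual ℝ _ g)
      ((fun s : ℝ => s • (y - x) + x) 0) := by
    simpa using hasGradientAt_iff_hasFDerivAt.mp hg
  have hφd : HasDerivAt φ ⟪g, y - x⟫ 0 := by
    have := hF.comp_hasDerivAt 0 hline
    simp only [InnerProductSpace.toDual_apply_apply] at this
    exact this
  have hs := hφconv.le_slope_of_hasDerivAt (Set.mem_univ 0) (Set.mem_univ 1)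
    zero_lt_one hφd
  have hslope : slope φ 0 1 = L y - L x := by
    simp [slope_def_field, φ]
  rw [hslope] at hs
  linarith


set_option maxHeartbeats 1000000 in
/-- Differential inequality for the Nesterov Lyapunov function: with
`v̄₂(t) = ζ²(1 - β̄(t)ā(t))β̄(t)`, along every Nesterov solution,
`d/dt V₁(z(t), t) ≤ -ā(t)V₁(z(t), t) - v̄₂(t)‖z₂(t)‖²` for `t ∈ [0,1)`, and
`d/dt V₁(z(t), t) ≤ -ā(t)V₁(z(t), t)` for `t ≥ 1`. -/
theorem nesterov_V1_differential_inequality {n : ℕ} (hn : 1 ≤ n)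
    (L : EuclideanSpace ℝ (Fin n) → ℝ)
    (hC1 : ContDiff ℝ 1 L)
    (hconv : ConvexOn ℝ Set.univ L)
    (zs : EuclideanSpace ℝ (Fin n))
    (hmin : ∀ z, L zs ≤ L z)
    (huniq : ∀ z, (∀ y, L z ≤ L y) → z = zs)
    (M : ℝ) (hM : 0 < M)
    (hLip : ∀ w u, ‖gradient L w - gradient L u‖ ≤ M * ‖w - u‖)
    (ζ : ℝ) (hζ : 0 < ζ)
    (z₁ z₂ : ℝ → EuclideanSpace ℝ (Fin n))
    (hz₁ : ∀ t, 0 ≤ t → HasDerivAt z₁ (z₂ t) t)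
    (hz₂ : ∀ t, 0 ≤ t →
      HasDerivAt z₂
        (-((2 * (3 / (2 * (t + 2)))) • z₂ t)
          - (ζ ^ 2 / M) • gradient L (z₁ t + ((t - 1) / (t + 2)) • z₂ t)) t) :
    (∀ t, 0 ≤ t → t < 1 →
      deriv (fun s =>
          (1 / 2) * ‖(2 / (s + 2)) • (z₁ s - zs) + z₂ s‖ ^ 2
            + (ζ ^ 2 / M) * (L (z₁ s) - L zs)) t
        ≤ -(2 / (t + 2))
              * ((1 / 2) * ‖(2 / (t + 2)) • (z₁ t - zs) + z₂ t‖ ^ 2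
                + (ζ ^ 2 / M) * (L (z₁ t) - L zs))
          - (ζ ^ 2 * (1 - ((t - 1) / (t + 2)) * (2 / (t + 2)))
              * ((t - 1) / (t + 2))) * ‖z₂ t‖ ^ 2) ∧
    (∀ t, 1 ≤ t →
      deriv (fun s =>
          (1 / 2) * ‖(2 / (s + 2)) • (z₁ s - zs) + z₂ s‖ ^ 2
            + (ζ ^ 2 / M) * (L (z₁ s) - L zs)) t
        ≤ -(2 / (t + 2))
              * ((1 / 2) * ‖(2 / (t + 2)) • (z₁ t - zs) + z₂ t‖ ^ 2
                + (ζ ^ 2 / M) * (L (z₁ t) - L zs))) := by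
  have hdiff : Differentiable ℝ L := hC1.differentiable one_ne_zero
  have fo : ∀ x y : EuclideanSpace ℝ (Fin n), L x + ⟪gradient L x, y - x⟫ ≤ L y :=
    fun x y => convex_first_order hconv (hdiff x).hasGradientAt y
  have key : ∀ t : ℝ, 0 ≤ t →
      deriv (fun s =>
          (1 / 2) * ‖(2 / (s + 2)) • (z₁ s - zs) + z₂ s‖ ^ 2
            + (ζ ^ 2 / M) * (L (z₁ s) - L zs)) t
        ≤ -(2 / (t + 2))
              * ((1 / 2) * ‖(2 / (t + 2)) • (z₁ t - zs) + z₂ t‖ ^ 2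
                + (ζ ^ 2 / M) * (L (z₁ t) - L zs))
          + (ζ ^ 2 / M) * (1 - (2 / (t + 2)) * ((t - 1) / (t + 2)))
              * ⟪gradient L (z₁ t)
                  - gradient L (z₁ t + ((t - 1) / (t + 2)) • z₂ t), z₂ t⟫ := by
    intro t ht
    have ht2 : (0:ℝ) < t + 2 := by linarith
    have ht2' : (t + 2 : ℝ) ≠ 0 := ne_of_gt ht2
    set b : ℝ := (t - 1) / (t + 2) with hb
    set a : ℝ := 2 / (t + 2) with ha
    set c : ℝ := ζ ^ 2 / M with hc
    set w : EuclideanSpace ℝ (Fin n) := z₁ t + b • z₂ t with hw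
    set g : EuclideanSpace ℝ (Fin n) := gradient L w with hgdef
    set G : EuclideanSpace ℝ (Fin n) := gradient L (z₁ t) with hGdef
    set U : EuclideanSpace ℝ (Fin n) := a • (z₁ t - zs) + z₂ t with hU
    -- derivative of the coefficient
    have hcoef : HasDerivAt (fun s : ℝ => 2 / (s + 2)) (-(2 / (t + 2) ^ 2)) t := by
      have h := (hasDerivAt_const t (2:ℝ)).div ((hasDerivAt_id t).add_const (2:ℝ)) ht2'
      have h' : HasDerivAt (fun s : ℝ => 2 / (s + 2))
          ((0 * (id t + 2) - 2 * 1) / (id t + 2) ^ 2) t := h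
      convert h' using 1
      simp only [id_eq]
      ring
    have hu2 : HasDerivAt (fun s => (2 / (s + 2)) • (z₁ s - zs) + z₂ s)
        ((-(a / 2)) • U - c • g) t := by
      have hu : HasDerivAt (fun s => (2 / (s + 2)) • (z₁ s - zs) + z₂ s)
          (((2 / (t + 2)) • z₂ t + (-(2 / (t + 2) ^ 2)) • (z₁ t - zs))
            + (-((2 * (3 / (2 * (t + 2)))) • z₂ t)
                - (ζ ^ 2 / M) • gradient L (z₁ t + ((t - 1) / (t + 2)) • z₂ t))) t :=
        (hcoef.smul ((hz₁ t ht).sub_const zs)).add (hz₂ t ht)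
      convert hu using 1
      rw [hU, ha, hc, hgdef, hw, hb]
      match_scalars <;> field_simp <;> ring
    have hL' : HasDerivAt (fun s => L (z₁ s)) ⟪G, z₂ t⟫ t := by
      have hF : HasFDerivAt L (InnerProductSpace.toDual ℝ _ G) (z₁ t) :=
        hasGradientAt_iff_hasFDerivAt.mp (hdiff (z₁ t)).hasGradientAt
      have := hF.comp_hasDerivAt t (hz₁ t ht)
      simp only [InnerProductSpace.toDual_apply_apply] at this
      exact this
    have hinner' : HasDerivAt
        (fun s => ‖(2 / (s + 2)) • (z₁ s - zs) + z₂ s‖ ^ 2)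
        (⟪U, (-(a / 2)) • U - c • g⟫ + ⟪(-(a / 2)) • U - c • g, U⟫) t := by
      have h := HasDerivAt.inner ℝ hu2 hu2
      simp only [real_inner_self_eq_norm_sq] at h
      exact h
    have hVd : HasDerivAt (fun s =>
        (1 / 2) * ‖(2 / (s + 2)) • (z₁ s - zs) + z₂ s‖ ^ 2
          + (ζ ^ 2 / M) * (L (z₁ s) - L zs))
        ((1 / 2) * (⟪U, (-(a / 2)) • U - c • g⟫ + ⟪(-(a / 2)) • U - c • g, U⟫)
          + c * ⟪G, z₂ t⟫) t :=
      (hinner'.const_mul ((1:ℝ) / 2)).add ((hL'.sub_const (L zs)).const_mul c)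
    rw [hVd.deriv]
    -- scalar abbreviations
    have hUg : ⟪U, g⟫ = a * ⟪g, z₁ t - zs⟫ + ⟪g, z₂ t⟫ := by
      rw [hU, inner_add_left, real_inner_smul_left, real_inner_comm (z₁ t - zs) g,
        real_inner_comm (z₂ t) g]
    have h1 : ⟪U, (-(a / 2)) • U - c • g⟫
        = -(a / 2) * ‖U‖ ^ 2 - c * (a * ⟪g, z₁ t - zs⟫ + ⟪g, z₂ t⟫) := by
      rw [inner_sub_right, real_inner_smul_right, real_inner_smul_right,
        real_inner_self_eq_norm_sq, hUg]
    have h2 : ⟪(-(a / 2)) • U - c • g, U⟫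
        = -(a / 2) * ‖U‖ ^ 2 - c * (a * ⟪g, z₁ t - zs⟫ + ⟪g, z₂ t⟫) := by
      rw [real_inner_comm, h1]
    have hXeq : ⟪G - g, z₂ t⟫ = ⟪G, z₂ t⟫ - ⟪g, z₂ t⟫ := inner_sub_left _ _ _
    -- convexity inequalities
    have F2 : L w + (-⟪g, z₁ t - zs⟫ - b * ⟪g, z₂ t⟫) ≤ L zs := by
      have e : zs - w = -(z₁ t - zs) - b • z₂ t := by rw [hw]; module
      have := fo w zs
      rwa [hgdef.symm, e, inner_sub_right, inner_neg_right, real_inner_smul_right] at this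
    have F3 : L (z₁ t) + b * ⟪G, z₂ t⟫ ≤ L w := by
      have e : w - z₁ t = b • z₂ t := by rw [hw]; module
      have := fo (z₁ t) w
      rwa [hGdef.symm, e, real_inner_smul_right] at this
    have F4 : L w + -(b * ⟪g, z₂ t⟫) ≤ L (z₁ t) := by
      have e : z₁ t - w = -(b • z₂ t) := by rw [hw]; module
      have := fo w (z₁ t)
      rwa [hgdef.symm, e, inner_neg_right, real_inner_smul_right] at this
    have ha0 : 0 ≤ a := by positivity
    have hc0 : 0 ≤ c := by positivity
    have hsum : a * (L (z₁ t) - L zs)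
        ≤ a * ⟪g, z₁ t - zs⟫ + a * b * ⟪g, z₂ t⟫ - a * b * ⟪G, z₂ t⟫ := by
      have m2 := mul_le_mul_of_nonneg_left F2 ha0
      have m3 := mul_le_mul_of_nonneg_left F3 ha0
      linarith [m2, m3]
    have hcsum := mul_le_mul_of_nonneg_left hsum hc0
    rw [h1, h2, hXeq]
    linarith [hcsum]
  constructor
  · -- t ∈ [0, 1)
    intro t ht ht1
    have ht2 : (0:ℝ) < t + 2 := by linarith
    have hbneg : (t - 1) / (t + 2) < 0 := div_neg_of_neg_of_pos (by linarith) ht2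
    have hab : 0 ≤ 1 - (2 / (t + 2)) * ((t - 1) / (t + 2)) := by
      rw [div_mul_div_comm]
      rw [sub_nonneg, div_le_one (by positivity)]
      nlinarith
    have hX : ⟪gradient L (z₁ t)
          - gradient L (z₁ t + ((t - 1) / (t + 2)) • z₂ t), z₂ t⟫
        ≤ M * (-((t - 1) / (t + 2))) * ‖z₂ t‖ ^ 2 := by
      have h1 := real_inner_le_norm (gradient L (z₁ t)
        - gradient L (z₁ t + ((t - 1) / (t + 2)) • z₂ t)) (z₂ t)
      have h2 := hLip (z₁ t) (z₁ t + ((t - 1) / (t + 2)) • z₂ t)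
      have h3 : ‖z₁ t - (z₁ t + ((t - 1) / (t + 2)) • z₂ t)‖
          = -((t - 1) / (t + 2)) * ‖z₂ t‖ := by
        have e : z₁ t - (z₁ t + ((t - 1) / (t + 2)) • z₂ t)
            = -(((t - 1) / (t + 2)) • z₂ t) := by module
        rw [e, norm_neg, norm_smul, Real.norm_eq_abs, abs_of_neg hbneg]
      rw [h3] at h2
      have h4 := mul_le_mul_of_nonneg_right h2 (norm_nonneg (z₂ t))
      have h5 : M * (-((t - 1) / (t + 2)) * ‖z₂ t‖) * ‖z₂ t‖
          = M * (-((t - 1) / (t + 2))) * ‖z₂ t‖ ^ 2 := by ring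
      linarith [h1, h4, h5.le, h5.ge]
    have hkey := key t ht
    have hcoe0 : 0 ≤ (ζ ^ 2 / M) * (1 - (2 / (t + 2)) * ((t - 1) / (t + 2))) := by
      have : (0:ℝ) ≤ ζ ^ 2 / M := by positivity
      exact mul_nonneg this hab
    have hfinal : (ζ ^ 2 / M) * (1 - (2 / (t + 2)) * ((t - 1) / (t + 2)))
          * ⟪gradient L (z₁ t)
              - gradient L (z₁ t + ((t - 1) / (t + 2)) • z₂ t), z₂ t⟫
        ≤ -(ζ ^ 2 * (1 - ((t - 1) / (t + 2)) * (2 / (t + 2)))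
            * ((t - 1) / (t + 2))) * ‖z₂ t‖ ^ 2 := by
      have h := mul_le_mul_of_nonneg_left hX hcoe0
      have e : (ζ ^ 2 / M) * (1 - (2 / (t + 2)) * ((t - 1) / (t + 2)))
          * (M * (-((t - 1) / (t + 2))) * ‖z₂ t‖ ^ 2)
          = -(ζ ^ 2 * (1 - ((t - 1) / (t + 2)) * (2 / (t + 2)))
            * ((t - 1) / (t + 2))) * ‖z₂ t‖ ^ 2 := by
        field_simp
      calc (ζ ^ 2 / M) * (1 - (2 / (t + 2)) * ((t - 1) / (t + 2)))
          * ⟪gradient L (z₁ t)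
              - gradient L (z₁ t + ((t - 1) / (t + 2)) • z₂ t), z₂ t⟫
          ≤ (ζ ^ 2 / M) * (1 - (2 / (t + 2)) * ((t - 1) / (t + 2)))
            * (M * (-((t - 1) / (t + 2))) * ‖z₂ t‖ ^ 2) := h
        _ = _ := e
    linarith
  · -- t ≥ 1
    intro t ht
    have ht0 : (0:ℝ) ≤ t := by linarith
    have ht2 : (0:ℝ) < t + 2 := by linarith
    have hab : 0 ≤ 1 - (2 / (t + 2)) * ((t - 1) / (t + 2)) := by
      rw [div_mul_div_comm]
      rw [sub_nonneg, div_le_one (by positivity)]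
      nlinarith
    have hX : ⟪gradient L (z₁ t)
          - gradient L (z₁ t + ((t - 1) / (t + 2)) • z₂ t), z₂ t⟫ ≤ 0 := by
      rcases eq_or_lt_of_le ht with h1 | h1
      · have hb0 : (t - 1) / (t + 2) = 0 := by rw [← h1]; norm_num
        rw [hb0]
        simp
      · have hbpos : 0 < (t - 1) / (t + 2) := div_pos (by linarith) ht2
        set b : ℝ := (t - 1) / (t + 2) with hb
        set w : EuclideanSpace ℝ (Fin n) := z₁ t + b • z₂ t with hw
        have F3 : L (z₁ t) + b * ⟪gradient L (z₁ t), z₂ t⟫ ≤ L w := by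
          have e : w - z₁ t = b • z₂ t := by rw [hw]; module
          have := fo (z₁ t) w
          rwa [e, real_inner_smul_right] at this
        have F4 : L w + -(b * ⟪gradient L w, z₂ t⟫) ≤ L (z₁ t) := by
          have e : z₁ t - w = -(b • z₂ t) := by rw [hw]; module
          have := fo w (z₁ t)
          rwa [e, inner_neg_right, real_inner_smul_right] at this
        rw [inner_sub_left]
        nlinarith [F3, F4, hbpos]
    have hkey := key t ht0
    have hcoe0 : 0 ≤ (ζ ^ 2 / M) * (1 - (2 / (t + 2)) * ((t - 1) / (t + 2))) := by
      have : (0:ℝ) ≤ ζ ^ 2 / M := by positivity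
      exact mul_nonneg this hab
    linarith [mul_nonneg hcoe0 (neg_nonneg.mpr hX), hkey]
end
end

section
/- Decay of the Nesterov Lyapunov function: every solution of the Nesterov system satisfies V₁((z₁(t), z₂(t)), t) ≤ (9/(t+2)²)·V₁((z₁(1), z₂(1)), 1) for all t ≥ 1. -/
open scoped RealInnerProductSpace

noncomputable section

lemma grad_convex_ineq {F : Type*} [NormedAddCommGroup F] [InnerProductSpace ℝ F]
    [CompleteSpace F] {L : F → ℝ} (hd : Differentiable ℝ L)
    (hconv : ConvexOn ℝ Set.univ L) (x y : F) :
    L x + ⟪gradient L x, y - x⟫ ≤ L y := by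
  set φ : ℝ → ℝ := fun s => L (x + s • (y - x)) with hφdef
  have hline : ∀ s : ℝ, HasDerivAt (fun s : ℝ => x + s • (y - x)) (y - x) s := by
    intro s
    simpa using ((hasDerivAt_id s).smul_const (y - x)).const_add x
  have hφ : ∀ s : ℝ, HasDerivAt φ ⟪gradient L (x + s • (y - x)), y - x⟫ s := by
    intro s
    have h1 := hasGradientAt_iff_hasFDerivAt.mp (hd (x + s • (y - x))).hasGradientAt
    have h2 := h1.comp_hasDerivAt s (hline s)
    simp only [InnerProductSpace.toDual_apply_apply] at h2
    exact h2
  have hconvφ : ConvexOn ℝ Set.univ φ := by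
    have h2 := hconv.comp_affineMap (AffineMap.lineMap x y : ℝ →ᵃ[ℝ] F)
    have h3 : φ = L ∘ (AffineMap.lineMap x y : ℝ →ᵃ[ℝ] F) := by
      funext s
      simp only [hφdef, Function.comp_apply, AffineMap.lineMap_apply_module]
      congr 1
      module
    rw [h3]
    simpa using h2
  have key := hconvφ.le_slope_of_hasDerivAt (Set.mem_univ (0:ℝ)) (Set.mem_univ (1:ℝ))
    one_pos (hφ 0)
  rw [slope_def_field] at key
  simp only [hφdef, zero_smul, add_zero, one_smul, add_sub_cancel, sub_zero, div_one] at key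
  linarith

set_option maxHeartbeats 1000000 in
/-- Decay of the Nesterov Lyapunov function: every Nesterov solution satisfies
`V₁(z(t), t) ≤ (9/(t+2)²) V₁(z(1), 1)` for all `t ≥ 1`. -/
theorem nesterov_V1_decay {n : ℕ} (hn : 1 ≤ n)
    (L : EuclideanSpace ℝ (Fin n) → ℝ)
    (hC1 : ContDiff ℝ 1 L)
    (hconv : ConvexOn ℝ Set.univ L)
    (zs : EuclideanSpace ℝ (Fin n))
    (hmin : ∀ z, L zs ≤ L z)
    (huniq : ∀ z, (∀ y, L z ≤ L y) → z = zs)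
    (M : ℝ) (hM : 0 < M)
    (hLip : ∀ w u, ‖gradient L w - gradient L u‖ ≤ M * ‖w - u‖)
    (ζ : ℝ) (hζ : 0 < ζ)
    (z₁ z₂ : ℝ → EuclideanSpace ℝ (Fin n))
    (hz₁ : ∀ t, 0 ≤ t → HasDerivAt z₁ (z₂ t) t)
    (hz₂ : ∀ t, 0 ≤ t →
      HasDerivAt z₂
        (-((2 * (3 / (2 * (t + 2)))) • z₂ t)
          - (ζ ^ 2 / M) • gradient L (z₁ t + ((t - 1) / (t + 2)) • z₂ t)) t) :
    ∀ t, 1 ≤ t →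
      (1 / 2) * ‖(2 / (t + 2)) • (z₁ t - zs) + z₂ t‖ ^ 2
          + (ζ ^ 2 / M) * (L (z₁ t) - L zs)
        ≤ (9 / (t + 2) ^ 2)
            * ((1 / 2) * ‖(2 / ((1 : ℝ) + 2)) • (z₁ 1 - zs) + z₂ 1‖ ^ 2
              + (ζ ^ 2 / M) * (L (z₁ 1) - L zs)) := by
  intro t ht
  have hd : Differentiable ℝ L := hC1.differentiable one_ne_zero
  set c : ℝ := ζ ^ 2 / M with hc
  have hcpos : 0 < c := div_pos (pow_pos hζ 2) hM
  set u : ℝ → EuclideanSpace ℝ (Fin n) :=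
    fun s => (2 : ℝ) • (z₁ s - zs) + (s + 2) • z₂ s with hudef
  set E : ℝ → ℝ :=
    fun s => (1 / 2) * ⟪u s, u s⟫ + c * (s + 2) ^ 2 * (L (z₁ s) - L zs) with hEdef
  -- derivative of u
  have hu' : ∀ s, 0 ≤ s →
      HasDerivAt u (-(c * (s + 2)) • gradient L (z₁ s + ((s - 1) / (s + 2)) • z₂ s)) s := by
    intro s hs
    have hs2 : s + 2 ≠ 0 := by linarith
    have h1 : HasDerivAt (fun r => (2 : ℝ) • (z₁ r - zs)) ((2 : ℝ) • z₂ s) s :=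
      ((hz₁ s hs).sub_const zs).const_smul (2 : ℝ)
    have h2 : HasDerivAt (fun r : ℝ => r + 2) 1 s := (hasDerivAt_id s).add_const 2
    have h3 := h2.smul (hz₂ s hs)
    have h4 := h1.add h3
    rw [hudef]
    refine h4.congr_deriv ?_
    match_scalars <;> field_simp <;> ring
  -- derivative of L ∘ z₁
  have hL1 : ∀ s, 0 ≤ s →
      HasDerivAt (fun r => L (z₁ r)) ⟪gradient L (z₁ s), z₂ s⟫ s := by
    intro s hs
    have h1 := hasGradientAt_iff_hasFDerivAt.mp (hd (z₁ s)).hasGradientAt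
    have h2 := h1.comp_hasDerivAt s (hz₁ s hs)
    simp only [InnerProductSpace.toDual_apply_apply] at h2
    exact h2
  -- derivative of E
  have hE' : ∀ s, 0 ≤ s →
      HasDerivAt E
        (c * (s + 2) *
          (2 * (L (z₁ s) - L zs)
            + (s + 2) * ⟪gradient L (z₁ s), z₂ s⟫
            - (2 * ⟪gradient L (z₁ s + ((s - 1) / (s + 2)) • z₂ s), z₁ s - zs⟫
              + (s + 2) * ⟪gradient L (z₁ s + ((s - 1) / (s + 2)) • z₂ s), z₂ s⟫))) s := by
    intro s hs
    have hinner := (hu' s hs).inner (𝕜 := ℝ) (hu' s hs)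
    have hsq : HasDerivAt (fun r : ℝ => c * (r + 2) ^ 2) (c * (2 * (s + 2))) s := by
      have := (((hasDerivAt_id s).add_const 2).pow 2).const_mul c
      refine this.congr_deriv ?_
      simp only [id_eq]
      ring
    have hprod := hsq.mul ((hL1 s hs).sub_const (L zs))
    have h5 := (hinner.const_mul (1 / 2)).add hprod
    rw [hEdef]
    refine h5.congr_deriv ?_
    rw [hudef]
    simp only [inner_add_left, inner_add_right, real_inner_smul_left, real_inner_smul_right,
      inner_neg_left, inner_neg_right]
    rw [real_inner_comm (z₁ s - zs) (gradient L (z₁ s + ((s - 1) / (s + 2)) • z₂ s)),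
      real_inner_comm (z₂ s) (gradient L (z₁ s + ((s - 1) / (s + 2)) • z₂ s))]
    ring
  -- E is antitone on [1, ∞)
  have hanti : AntitoneOn E (Set.Ici (1 : ℝ)) := by
    apply antitoneOn_of_deriv_nonpos (convex_Ici 1)
    · intro s hs
      exact (hE' s (by simp at hs; linarith)).differentiableAt.continuousAt.continuousWithinAt
    · rw [interior_Ici]
      intro s hs
      exact (hE' s (by simp at hs; linarith)).differentiableAt.differentiableWithinAt
    · rw [interior_Ici]
      intro s hs
      have hs1 : (1 : ℝ) < s := hs
      have hs0 : (0 : ℝ) ≤ s := by linarith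
      rw [(hE' s hs0).deriv]
      -- main inequality
      set ys := z₁ s + ((s - 1) / (s + 2)) • z₂ s with hys
      set β : ℝ := (s - 1) / (s + 2) with hβ
      have hβpos : 0 < β := div_pos (by linarith) (by linarith)
      have hβτ : 2 * β ≤ s + 2 := by
        rw [hβ, ← mul_div_assoc, div_le_iff₀ (by linarith : (0:ℝ) < s + 2)]
        nlinarith
      have f1 := grad_convex_ineq hd hconv ys zs
      have f2 := grad_convex_ineq hd hconv (z₁ s) ys
      have f3 := grad_convex_ineq hd hconv ys (z₁ s)
      have e1 : zs - ys = -(z₁ s - zs) - β • z₂ s := by rw [hys]; module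
      have e2 : ys - z₁ s = β • z₂ s := by rw [hys]; module
      have e3 : z₁ s - ys = -(β • z₂ s) := by rw [hys]; module
      rw [e1, inner_sub_right, inner_neg_right, real_inner_smul_right] at f1
      rw [e2, real_inner_smul_right] at f2
      rw [e3, inner_neg_right, real_inner_smul_right] at f3
      set A := ⟪gradient L ys, z₁ s - zs⟫ with hA
      set B := ⟪gradient L ys, z₂ s⟫ with hB
      set Cq := ⟪gradient L (z₁ s), z₂ s⟫ with hCq
      have hBC : Cq ≤ B := by
        have h6 : β * Cq ≤ β * B := by linarith
        exact le_of_mul_le_mul_left h6 hβpos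
      have h7 : 2 * (L (z₁ s) - L zs) + (s + 2) * Cq
          - (2 * A + (s + 2) * B) ≤ 0 := by
        nlinarith [mul_nonneg (by linarith : (0:ℝ) ≤ s + 2 - 2 * β)
          (by linarith : (0:ℝ) ≤ B - Cq), f1, f2]
      have h8 : 0 ≤ c * (s + 2) := by positivity
      nlinarith [mul_nonneg h8 (neg_nonneg.mpr h7)]

  -- conclude
  have hEle : E t ≤ E 1 := hanti (Set.mem_Ici.mpr le_rfl) (Set.mem_Ici.mpr ht) ht
  have ht2 : (0 : ℝ) < (t + 2) ^ 2 := by positivity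
  have hnorm_t : ⟪u t, u t⟫ = (t + 2) ^ 2 * ‖(2 / (t + 2)) • (z₁ t - zs) + z₂ t‖ ^ 2 := by
    have h9 : u t = (t + 2) • ((2 / (t + 2)) • (z₁ t - zs) + z₂ t) := by
      rw [hudef]
      match_scalars <;> field_simp <;> try ring
    rw [h9, real_inner_smul_left, real_inner_smul_right, real_inner_self_eq_norm_sq]
    ring
  have hnorm_1 : ⟪u 1, u 1⟫
      = ((1:ℝ) + 2) ^ 2 * ‖(2 / ((1:ℝ) + 2)) • (z₁ 1 - zs) + z₂ 1‖ ^ 2 := by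
    have h9 : u 1 = ((1:ℝ) + 2) • ((2 / ((1:ℝ) + 2)) • (z₁ 1 - zs) + z₂ 1) := by
      rw [hudef]
      match_scalars <;> norm_num
    rw [h9, real_inner_smul_left, real_inner_smul_right, real_inner_self_eq_norm_sq]
    ring
  simp only [hEdef] at hEle
  rw [hnorm_t, hnorm_1] at hEle
  rw [show ∀ y : ℝ, 9 / (t + 2) ^ 2 * y = 9 * y / (t + 2) ^ 2 from fun y => by ring,
    le_div_iff₀ ht2]
  nlinarith [hEle]
end
end

section
/- Linear growth bound on the Nesterov vector field: define f((z₁, z₂), t) := (z₂, -2 d̄(t) z₂ - (ζ²/M) ∇L(z₁ + β̄(t) z₂)). Then for every (z₁, z₂) ∈ ℝ^n × ℝ^n and every t ≥ 0, ‖f((z₁, z₂), t)‖² ≤ (11/2 + 4ζ⁴)·(‖z₁ - z₁*‖² + ‖z₂‖²). -/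
open scoped RealInnerProductSpace

noncomputable section

/-- Linear growth bound on the Nesterov vector field
`f((z₁,z₂),t) = (z₂, -2d̄(t)z₂ - (ζ²/M)∇L(z₁ + β̄(t)z₂))`:
`‖f((z₁,z₂),t)‖² ≤ (11/2 + 4ζ⁴)(‖z₁ - z₁*‖² + ‖z₂‖²)` for all `t ≥ 0`. -/
theorem nesterov_vector_field_growth {n : ℕ} (hn : 1 ≤ n)
    (L : EuclideanSpace ℝ (Fin n) → ℝ)
    (hC1 : ContDiff ℝ 1 L)
    (hconv : ConvexOn ℝ Set.univ L)
    (zs : EuclideanSpace ℝ (Fin n))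
    (hmin : ∀ z, L zs ≤ L z)
    (huniq : ∀ z, (∀ y, L z ≤ L y) → z = zs)
    (M : ℝ) (hM : 0 < M)
    (hLip : ∀ w u, ‖gradient L w - gradient L u‖ ≤ M * ‖w - u‖)
    (ζ : ℝ) (hζ : 0 < ζ) :
    ∀ z₁ z₂ : EuclideanSpace ℝ (Fin n), ∀ t : ℝ, 0 ≤ t →
      ‖z₂‖ ^ 2
        + ‖-((2 * (3 / (2 * (t + 2)))) • z₂)
            - (ζ ^ 2 / M) • gradient L (z₁ + ((t - 1) / (t + 2)) • z₂)‖ ^ 2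
      ≤ (11 / 2 + 4 * ζ ^ 4) * (‖z₁ - zs‖ ^ 2 + ‖z₂‖ ^ 2) := by
  intro z₁ z₂ t ht
  -- the gradient vanishes at the minimizer
  have hgrad0 : gradient L zs = 0 := by
    have hloc : IsLocalMin L zs := (isMinOn_univ_iff.2 hmin).isLocalMin Filter.univ_mem
    have hf : fderiv ℝ L zs = 0 :=
      hloc.fderiv_eq_zero
    simp [gradient, hf]
  set β : ℝ := (t - 1) / (t + 2) with hβ
  set w := z₁ + β • z₂ with hw
  have habs : |β| ≤ 1 := by
    rw [abs_div]
    rw [div_le_one (by rw [abs_of_pos]; linarith; linarith)]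
    rw [abs_of_pos (by linarith : (0:ℝ) < t + 2)]
    cases abs_cases (t - 1) with
    | inl h => linarith [h.1]
    | inr h => linarith [h.1]
  set a := ‖z₁ - zs‖ with ha
  set b := ‖z₂‖ with hb
  have ha0 : 0 ≤ a := norm_nonneg _
  have hb0 : 0 ≤ b := norm_nonneg _
  have hg : ‖gradient L w‖ ≤ M * (a + b) := by
    have h1 : ‖gradient L w‖ ≤ M * ‖w - zs‖ := by
      have := hLip w zs
      rwa [hgrad0, sub_zero] at this
    have h2 : ‖w - zs‖ ≤ a + b := by
      have : w - zs = (z₁ - zs) + β • z₂ := by rw [hw]; abel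
      rw [this]
      calc ‖(z₁ - zs) + β • z₂‖ ≤ ‖z₁ - zs‖ + ‖β • z₂‖ := norm_add_le _ _
        _ ≤ a + b := by
            rw [norm_smul, Real.norm_eq_abs]
            have : |β| * ‖z₂‖ ≤ 1 * ‖z₂‖ :=
              mul_le_mul_of_nonneg_right habs (norm_nonneg _)
            simp only [one_mul] at this
            linarith
    calc ‖gradient L w‖ ≤ M * ‖w - zs‖ := h1
      _ ≤ M * (a + b) := by nlinarith
  -- bound the norm of the second component
  have hc : (0:ℝ) ≤ 2 * (3 / (2 * (t + 2))) := by positivity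
  have hcle : 2 * (3 / (2 * (t + 2))) ≤ 3 / 2 := by
    have he : 2 * (3 / (2 * (t + 2))) = 3 / (t + 2) := by
      field_simp
    rw [he, div_le_div_iff₀ (by linarith) (by norm_num)]
    linarith
  have hsecond : ‖-((2 * (3 / (2 * (t + 2)))) • z₂) - (ζ ^ 2 / M) • gradient L w‖
      ≤ (3 / 2) * b + ζ ^ 2 * (a + b) := by
    calc ‖-((2 * (3 / (2 * (t + 2)))) • z₂) - (ζ ^ 2 / M) • gradient L w‖
        ≤ ‖-((2 * (3 / (2 * (t + 2)))) • z₂)‖ + ‖(ζ ^ 2 / M) • gradient L w‖ :=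
          norm_sub_le _ _
      _ = (2 * (3 / (2 * (t + 2)))) * b + (ζ ^ 2 / M) * ‖gradient L w‖ := by
          rw [norm_neg, norm_smul, norm_smul, Real.norm_eq_abs, Real.norm_eq_abs,
            abs_of_nonneg hc, abs_of_nonneg (by positivity : (0:ℝ) ≤ ζ ^ 2 / M)]
      _ ≤ (3 / 2) * b + ζ ^ 2 * (a + b) := by
          have h1 : (2 * (3 / (2 * (t + 2)))) * b ≤ (3 / 2) * b :=
            mul_le_mul_of_nonneg_right hcle hb0
          have h2 : (ζ ^ 2 / M) * ‖gradient L w‖ ≤ (ζ ^ 2 / M) * (M * (a + b)) :=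
            mul_le_mul_of_nonneg_left hg (by positivity)
          have h3 : (ζ ^ 2 / M) * (M * (a + b)) = ζ ^ 2 * (a + b) := by
            field_simp
          linarith
  have hnn : (0:ℝ) ≤ ‖-((2 * (3 / (2 * (t + 2)))) • z₂) - (ζ ^ 2 / M) • gradient L w‖ :=
    norm_nonneg _
  nlinarith [sq_nonneg (a - b), sq_nonneg (3 * b - 2 * ζ ^ 2 * (a + b)), sq_nonneg ζ,
    sq_nonneg (ζ^2), mul_nonneg ha0 hb0, hsecond, hnn,
    sq_nonneg ((3/2) * b + ζ^2 * (a+b))]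
end
end

section
/- Convergence rate of Nesterov's method in terms of initial data: there exists a constant c > 0, depending only on ζ and M, such that every solution of the Nesterov system satisfies, for all t ≥ 1, (ζ²/M)·(L(z₁(t)) - L*) ≤ V₁((z₁(t), z₂(t)), t) ≤ (9c/(t+2)²)·(‖z₁(0) - z₁*‖² + ‖z₂(0)‖²); in particular L(z₁(t)) - L* decays at rate 1/(t+2)². -/
open scoped RealInnerProductSpace

noncomputable section

section Aux

variable {E : Type*} [NormedAddCommGroup E] [InnerProductSpace ℝ E] [CompleteSpace E]

lemma aux_hasDerivAt_comp {L : E → ℝ} {γ : ℝ → E} {v : E} {t : ℝ}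
    (hL : DifferentiableAt ℝ L (γ t)) (hγ : HasDerivAt γ v t) :
    HasDerivAt (fun s => L (γ s)) ⟪gradient L (γ t), v⟫ t := by
  have h := (hL.hasGradientAt.hasFDerivAt).comp_hasDerivAt t hγ
  simpa [Function.comp_def, InnerProductSpace.toDual_apply_apply] using h

lemma aux_convex_grad {L : E → ℝ} (hc : ConvexOn ℝ Set.univ L) (hd : Differentiable ℝ L)
    (x y : E) : L x + ⟪gradient L x, y - x⟫ ≤ L y := by
  have hline : ∀ s : ℝ, HasDerivAt (fun r : ℝ => x + r • (y - x)) (y - x) s := by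
    intro s
    simpa using ((hasDerivAt_id s).smul_const (y - x)).const_add x
  have hconvφ : ConvexOn ℝ Set.univ (fun s : ℝ => L (x + s • (y - x))) := by
    have h := hc.comp_affineMap (AffineMap.lineMap x y : ℝ →ᵃ[ℝ] E)
    have : (fun s : ℝ => L (x + s • (y - x))) =
        (L ∘ (AffineMap.lineMap x y : ℝ →ᵃ[ℝ] E)) := by
      funext s
      simp [AffineMap.lineMap_apply, Function.comp]
      rw [add_comm]
    rw [this]
    simpa using h
  have hder : HasDerivAt (fun s : ℝ => L (x + s • (y - x)))
      ⟪gradient L (x + (0:ℝ) • (y - x)), y - x⟫ 0 :=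
    aux_hasDerivAt_comp (hd _) (hline 0)
  have hslope := hconvφ.le_slope_of_hasDerivAt (Set.mem_univ (0:ℝ)) (Set.mem_univ (1:ℝ))
    one_pos hder
  have h0 : x + (0:ℝ) • (y - x) = x := by simp
  have h1 : x + (1:ℝ) • (y - x) = y := by simp
  rw [slope_def_field] at hslope
  rw [h0] at hslope
  simp only [h0, h1] at hslope
  have : ⟪gradient L x, y - x⟫ ≤ L y - L x := by
    simpa using hslope
  linarith

lemma aux_grad_min {L : E → ℝ} {zs : E} (hmin : ∀ z, L zs ≤ L z) : gradient L zs = 0 := by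
  have h : IsLocalMin L zs := Filter.Eventually.of_forall fun z => hmin z
  have h2 : fderiv ℝ L zs = 0 := h.fderiv_eq_zero
  simp [gradient, h2]

lemma aux_key (k a b pg qg qh Ly Lz Ls : ℝ) (hk : 0 ≤ k) (ha : 0 < a) (hb : 0 ≤ b)
    (hab : a * b ≤ 1) (hb0 : b = 0 → qg = qh)
    (f1 : Ly - Ls ≤ pg + b * qg) (f2 : b * qh ≤ Ly - Lz) (f3 : Ly - Lz ≤ b * qg) :
    k * qh - k * qg - k * (a * pg) ≤ -(a * (k * (Lz - Ls))) := by
  rcases eq_or_lt_of_le hb with h0 | hbpos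
  · have hq : qg = qh := hb0 h0.symm
    rw [← h0] at f1 f2 f3
    simp only [zero_mul, mul_zero] at f1 f2 f3
    have hLy : Ly = Lz := le_antisymm (by linarith) (by linarith)
    have hkq : k * qg = k * qh := by rw [hq]
    have hmul : (a * k) * (Lz - Ls) ≤ (a * k) * pg := by
      apply mul_le_mul_of_nonneg_left _ (mul_nonneg ha.le hk)
      linarith
    nlinarith [hmul, hkq]
  · have hqh : qh ≤ qg := by
      have h1 : b * qh ≤ b * qg := le_trans f2 f3
      exact le_of_mul_le_mul_left h1 hbpos
    nlinarith [mul_le_mul_of_nonneg_left f1 (mul_nonneg ha.le hk),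
      mul_le_mul_of_nonneg_left f2 (mul_nonneg ha.le hk),
      mul_le_mul_of_nonneg_left hqh (mul_nonneg hk (by linarith : (0:ℝ) ≤ 1 - a * b))]

lemma aux_keyQfin (z2 cg np nq pq qp kqG kGq kHq lk : ℝ)
    (hz2 : 0 ≤ z2) (hcg : 0 ≤ cg) (hnp : 0 ≤ np) (hnq : 0 ≤ nq) (hlk : 0 ≤ lk)
    (i1 : pq ≤ np * nq) (i2 : qp ≤ np * nq)
    (s1 : -kqG ≤ z2 * (np + nq) * nq) (s2 : -kGq ≤ z2 * (np + nq) * nq)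
    (s3 : kHq ≤ z2 * np * nq) :
    pq + qp + (-(cg * nq ^ 2) - kqG) + (-(cg * nq ^ 2) - kGq) + kHq
      ≤ (1 + 4 * z2) * (np ^ 2 + nq ^ 2 + lk) := by
  nlinarith [sq_nonneg (np - nq), mul_nonneg hz2 (sq_nonneg (np - nq)),
    mul_nonneg hz2 (sq_nonneg nq), mul_nonneg hz2 (sq_nonneg np),
    mul_nonneg hcg (sq_nonneg nq), mul_nonneg hz2 hlk]

end Aux

set_option maxHeartbeats 4000000 in
/-- Convergence rate of Nesterov's method in terms of initial data: there exists
`c > 0`, depending only on `ζ` and `M`, such that every solution satisfies, for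
`t ≥ 1`, `(ζ²/M)(L(z₁(t)) - L*) ≤ V₁(z(t), t) ≤ (9c/(t+2)²)(‖z₁(0) - z₁*‖² + ‖z₂(0)‖²)`. -/
theorem nesterov_convergence_rate (ζ M : ℝ) (hζ : 0 < ζ) (hM : 0 < M) :
    ∃ c : ℝ, 0 < c ∧
      ∀ (n : ℕ), 1 ≤ n →
      ∀ (L : EuclideanSpace ℝ (Fin n) → ℝ) (zs : EuclideanSpace ℝ (Fin n)),
        ContDiff ℝ 1 L →
        ConvexOn ℝ Set.univ L →
        (∀ z, L zs ≤ L z) →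
        (∀ z, (∀ y, L z ≤ L y) → z = zs) →
        (∀ w u, ‖gradient L w - gradient L u‖ ≤ M * ‖w - u‖) →
        ∀ z₁ z₂ : ℝ → EuclideanSpace ℝ (Fin n),
          (∀ t, 0 ≤ t → HasDerivAt z₁ (z₂ t) t) →
          (∀ t, 0 ≤ t →
            HasDerivAt z₂
              (-((2 * (3 / (2 * (t + 2)))) • z₂ t)
                - (ζ ^ 2 / M) • gradient L (z₁ t + ((t - 1) / (t + 2)) • z₂ t)) t) →
          ∀ t, 1 ≤ t →
            (ζ ^ 2 / M) * (L (z₁ t) - L zs)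
              ≤ (1 / 2) * ‖(2 / (t + 2)) • (z₁ t - zs) + z₂ t‖ ^ 2
                  + (ζ ^ 2 / M) * (L (z₁ t) - L zs) ∧
            (1 / 2) * ‖(2 / (t + 2)) • (z₁ t - zs) + z₂ t‖ ^ 2
                + (ζ ^ 2 / M) * (L (z₁ t) - L zs)
              ≤ (9 * c / (t + 2) ^ 2) * (‖z₁ 0 - zs‖ ^ 2 + ‖z₂ 0‖ ^ 2) := by
  classical
  set K : ℝ := 1 + 4 * ζ ^ 2 with hK_def
  refine ⟨Real.exp K * (1 + ζ ^ 2), by positivity, ?_⟩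
  intro n hn L zs hC1 hconv hmin _huniq hLip z₁ z₂ hz₁ hz₂ t ht
  set k : ℝ := ζ ^ 2 / M with hk_def
  have hk : 0 < k := by positivity
  have hd : Differentiable ℝ L := hC1.differentiable one_ne_zero
  have hJ : ∀ x y : EuclideanSpace ℝ (Fin n), L x + ⟪gradient L x, y - x⟫ ≤ L y :=
    fun x y => aux_convex_grad hconv hd x y
  have hg0 : gradient L zs = 0 := aux_grad_min hmin
  have hLz : ∀ x, ‖gradient L x‖ ≤ M * ‖x - zs‖ := fun x => by
    simpa [hg0] using hLip x zs
  -- main quantities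
  set u : ℝ → EuclideanSpace ℝ (Fin n) := fun σ => (2 / (σ + 2)) • (z₁ σ - zs) + z₂ σ
    with hu_def
  set V : ℝ → ℝ := fun σ => (1 / 2) * ⟪u σ, u σ⟫ + k * (L (z₁ σ) - L zs) with hV_def
  set Q : ℝ → ℝ := fun σ => ⟪z₁ σ - zs, z₁ σ - zs⟫ + ⟪z₂ σ, z₂ σ⟫ + k * (L (z₁ σ) - L zs)
    with hQ_def
  -- derivative of u
  have huD : ∀ τ : ℝ, 0 ≤ τ →
      HasDerivAt u (-((1 / (τ + 2)) • u τ)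
        - k • gradient L (z₁ τ + ((τ - 1) / (τ + 2)) • z₂ τ)) τ := by
    intro τ hτ
    have hs0 : (0:ℝ) < τ + 2 := by linarith
    have hne : (τ + 2 : ℝ) ≠ 0 := ne_of_gt hs0
    have h1 : HasDerivAt (fun σ : ℝ => 2 / (σ + 2)) (-(2 / (τ + 2) ^ 2)) τ := by
      have h := ((hasDerivAt_id τ).add_const (2:ℝ)).inv hne
      have h2 := h.const_mul (2:ℝ)
      have he : -(2 / (τ + 2) ^ 2) = 2 * (-1 / (id τ + 2) ^ 2) := by simp; ring
      rw [he]
      simpa only [div_eq_mul_inv, one_mul, neg_mul, mul_neg, Pi.inv_apply, id] using h2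
    have h2 : HasDerivAt (fun σ => (2 / (σ + 2)) • (z₁ σ - zs))
        ((2 / (τ + 2)) • (z₂ τ) + (-(2 / (τ + 2) ^ 2)) • (z₁ τ - zs)) τ :=
      h1.smul ((hz₁ τ hτ).sub_const zs)
    have h3 := h2.add (hz₂ τ hτ)
    have heq : -((1 / (τ + 2)) • u τ)
        - k • gradient L (z₁ τ + ((τ - 1) / (τ + 2)) • z₂ τ)
        = (2 / (τ + 2)) • (z₂ τ) + (-(2 / (τ + 2) ^ 2)) • (z₁ τ - zs)
          + (-((2 * (3 / (2 * (τ + 2)))) • z₂ τ)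
            - k • gradient L (z₁ τ + ((τ - 1) / (τ + 2)) • z₂ τ)) := by
      rw [hu_def]
      match_scalars <;> field_simp <;> ring_nf
    rw [heq]
    exact h3
  -- derivative of V
  have hVD : ∀ τ : ℝ, 0 ≤ τ →
      HasDerivAt V (⟪u τ, -((1 / (τ + 2)) • u τ)
          - k • gradient L (z₁ τ + ((τ - 1) / (τ + 2)) • z₂ τ)⟫
        + k * ⟪gradient L (z₁ τ), z₂ τ⟫) τ := by
    intro τ hτ
    have hi := HasDerivAt.inner ℝ (huD τ hτ) (huD τ hτ)
    have hL1 : HasDerivAt (fun σ => L (z₁ σ)) ⟪gradient L (z₁ τ), z₂ τ⟫ τ :=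
      aux_hasDerivAt_comp (hd _) (hz₁ τ hτ)
    have h := (hi.const_mul (1/2 : ℝ)).add ((hL1.sub_const (L zs)).const_mul k)
    refine HasDerivAt.congr_deriv h ?_
    rw [real_inner_comm (u τ) (-((1 / (τ + 2)) • u τ)
      - k • gradient L (z₁ τ + ((τ - 1) / (τ + 2)) • z₂ τ))]
    ring
  -- the decrease inequality for V at τ ≥ 1
  have hdec : ∀ τ : ℝ, 1 ≤ τ →
      ⟪u τ, -((1 / (τ + 2)) • u τ)
          - k • gradient L (z₁ τ + ((τ - 1) / (τ + 2)) • z₂ τ)⟫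
        + k * ⟪gradient L (z₁ τ), z₂ τ⟫ ≤ -((2 / (τ + 2)) * V τ) := by
    intro τ hτ
    have hs0 : (0:ℝ) < τ + 2 := by linarith
    set b : ℝ := (τ - 1) / (τ + 2) with hb_def
    set a : ℝ := 2 / (τ + 2) with ha_def
    have ha : 0 < a := by positivity
    have hb : 0 ≤ b := div_nonneg (by linarith) hs0.le
    have hab : a * b ≤ 1 := by
      rw [ha_def, hb_def, div_mul_div_comm, div_le_one (by positivity)]
      linarith [mul_self_nonneg τ]
    set p : EuclideanSpace ℝ (Fin n) := z₁ τ - zs with hp_def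
    set q : EuclideanSpace ℝ (Fin n) := z₂ τ with hq_def
    set y : EuclideanSpace ℝ (Fin n) := z₁ τ + b • q with hy_def
    set G : EuclideanSpace ℝ (Fin n) := gradient L y with hG_def
    set H : EuclideanSpace ℝ (Fin n) := gradient L (z₁ τ) with hH_def
    -- convexity facts
    have f1 : L y - L zs ≤ ⟪p, G⟫ + b * ⟪q, G⟫ := by
      have h := hJ y zs
      have e : ⟪G, zs - y⟫ = -(⟪p, G⟫ + b * ⟪q, G⟫) := by
        have e2 : zs - y = -(p + b • q) := by rw [hy_def, hp_def]; module
        rw [e2, inner_neg_right, inner_add_right, real_inner_smul_right,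
          real_inner_comm G p, real_inner_comm G q]
      rw [e] at h
      linarith
    have f2 : b * ⟪H, q⟫ ≤ L y - L (z₁ τ) := by
      have h := hJ (z₁ τ) y
      have e : ⟪H, y - z₁ τ⟫ = b * ⟪H, q⟫ := by
        have e2 : y - z₁ τ = b • q := by rw [hy_def]; module
        rw [e2, real_inner_smul_right]
      rw [e] at h
      linarith
    have f3 : L y - L (z₁ τ) ≤ b * ⟪q, G⟫ := by
      have h := hJ y (z₁ τ)
      have e : ⟪G, z₁ τ - y⟫ = -(b * ⟪q, G⟫) := by
        have e2 : z₁ τ - y = -(b • q) := by rw [hy_def]; module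
        rw [e2, inner_neg_right, real_inner_smul_right, real_inner_comm G q]
      rw [e] at h
      linarith
    have hb0 : b = 0 → ⟪q, G⟫ = ⟪H, q⟫ := by
      intro h0
      have : y = z₁ τ := by rw [hy_def, h0]; simp
      rw [hG_def, this, ← hH_def, real_inner_comm]
    have key := aux_key k a b ⟪p, G⟫ ⟪q, G⟫ ⟪H, q⟫ (L y) (L (z₁ τ)) (L zs)
      hk.le ha hb hab hb0 f1 f2 f3
    -- expand the inner products
    have hexp : ⟪u τ, -((1 / (τ + 2)) • u τ) - k • G⟫
        = -((1 / (τ + 2)) * ⟪u τ, u τ⟫) - k * (a * ⟪p, G⟫ + ⟪q, G⟫) := by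
      rw [inner_sub_right, inner_neg_right, real_inner_smul_right, real_inner_smul_right]
      have huτ : u τ = a • p + q := by rw [hu_def, ha_def, hp_def, hq_def]
      have : ⟪u τ, G⟫ = a * ⟪p, G⟫ + ⟪q, G⟫ := by
        rw [huτ, inner_add_left, real_inner_smul_left]
      rw [this]
    rw [hexp]
    have hVτ : V τ = (1 / 2) * ⟪u τ, u τ⟫ + k * (L (z₁ τ) - L zs) := rfl
    rw [hVτ]
    have haa : (1 / (τ + 2)) * ⟪u τ, u τ⟫ = a * ((1/2) * ⟪u τ, u τ⟫) := by
      rw [ha_def]; ring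
    linarith [key, haa]
  -- W := (τ+2)^2 * V is antitone on [1, ∞)
  set W : ℝ → ℝ := fun σ => (σ + 2) ^ 2 * V σ with hW_def
  have hWD : ∀ τ : ℝ, 0 ≤ τ → HasDerivAt W
      ((2 * (τ + 2)) * V τ + (τ + 2) ^ 2 *
        (⟪u τ, -((1 / (τ + 2)) • u τ)
          - k • gradient L (z₁ τ + ((τ - 1) / (τ + 2)) • z₂ τ)⟫
        + k * ⟪gradient L (z₁ τ), z₂ τ⟫)) τ := by
    intro τ hτ
    have h1 : HasDerivAt (fun σ : ℝ => (σ + 2) ^ 2) (2 * (τ + 2)) τ := by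
      have := ((hasDerivAt_id τ).add_const (2:ℝ)).pow 2
      simpa [Pi.pow_def] using this
    exact h1.mul (hVD τ hτ)
  have hW_anti : AntitoneOn W (Set.Ici 1) := by
    apply antitoneOn_of_deriv_nonpos (convex_Ici 1)
    · intro τ hτ
      have hτ0 : (0:ℝ) ≤ τ := le_trans zero_le_one hτ
      exact (hWD τ hτ0).continuousAt.continuousWithinAt
    · intro τ hτ
      rw [interior_Ici] at hτ
      have hτ0 : (0:ℝ) ≤ τ := by have := hτ.out; linarith
      exact (hWD τ hτ0).differentiableAt.differentiableWithinAt
    · intro τ hτ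
      rw [interior_Ici] at hτ
      have hτ1 : (1:ℝ) ≤ τ := le_of_lt hτ
      have hτ0 : (0:ℝ) ≤ τ := le_trans zero_le_one hτ1
      rw [(hWD τ hτ0).deriv]
      have hs0 : (0:ℝ) < τ + 2 := by linarith
      have hbd := hdec τ hτ1
      have h2 : (τ + 2) ^ 2 *
          (⟪u τ, -((1 / (τ + 2)) • u τ)
            - k • gradient L (z₁ τ + ((τ - 1) / (τ + 2)) • z₂ τ)⟫
          + k * ⟪gradient L (z₁ τ), z₂ τ⟫) ≤ (τ + 2) ^ 2 * (-((2 / (τ + 2)) * V τ)) :=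
        mul_le_mul_of_nonneg_left hbd (by positivity)
      have h3 : (τ + 2) ^ 2 * (-((2 / (τ + 2)) * V τ)) = -((2 * (τ + 2)) * V τ) := by
        field_simp
      linarith [h2, h3.le, h3.ge]
    done
  have hVt9 : (t + 2) ^ 2 * V t ≤ 9 * V 1 := by
    have h := hW_anti (Set.mem_Ici.2 (le_refl (1:ℝ))) (Set.mem_Ici.2 ht) ht
    have h1 : W 1 = 9 * V 1 := by rw [hW_def]; norm_num
    have h2 : W t = (t + 2) ^ 2 * V t := rfl
    linarith [h]
  -- Q is bounded: R := exp(-(K σ)) * Q σ is antitone on [0,1]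
  have hQD : ∀ τ : ℝ, 0 ≤ τ → HasDerivAt Q
      ((⟪z₁ τ - zs, z₂ τ⟫ + ⟪z₂ τ, z₁ τ - zs⟫)
        + (⟪z₂ τ, -((2 * (3 / (2 * (τ + 2)))) • z₂ τ)
              - k • gradient L (z₁ τ + ((τ - 1) / (τ + 2)) • z₂ τ)⟫
          + ⟪-((2 * (3 / (2 * (τ + 2)))) • z₂ τ)
              - k • gradient L (z₁ τ + ((τ - 1) / (τ + 2)) • z₂ τ), z₂ τ⟫)
        + k * ⟪gradient L (z₁ τ), z₂ τ⟫) τ := by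
    intro τ hτ
    have h1 := HasDerivAt.inner ℝ ((hz₁ τ hτ).sub_const zs) ((hz₁ τ hτ).sub_const zs)
    have h2 := HasDerivAt.inner ℝ (hz₂ τ hτ) (hz₂ τ hτ)
    have hL1 : HasDerivAt (fun σ => L (z₁ σ)) ⟪gradient L (z₁ τ), z₂ τ⟫ τ :=
      aux_hasDerivAt_comp (hd _) (hz₁ τ hτ)
    exact (h1.add h2).add ((hL1.sub_const (L zs)).const_mul k)
  have hQbound : ∀ τ : ℝ, 0 ≤ τ →
      ((⟪z₁ τ - zs, z₂ τ⟫ + ⟪z₂ τ, z₁ τ - zs⟫)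
        + (⟪z₂ τ, -((2 * (3 / (2 * (τ + 2)))) • z₂ τ)
              - k • gradient L (z₁ τ + ((τ - 1) / (τ + 2)) • z₂ τ)⟫
          + ⟪-((2 * (3 / (2 * (τ + 2)))) • z₂ τ)
              - k • gradient L (z₁ τ + ((τ - 1) / (τ + 2)) • z₂ τ), z₂ τ⟫)
        + k * ⟪gradient L (z₁ τ), z₂ τ⟫) ≤ K * Q τ := by
    intro τ hτ
    have hs0 : (0:ℝ) < τ + 2 := by linarith
    set b : ℝ := (τ - 1) / (τ + 2) with hb_def
    set p : EuclideanSpace ℝ (Fin n) := z₁ τ - zs with hp_def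
    set q : EuclideanSpace ℝ (Fin n) := z₂ τ with hq_def
    set y : EuclideanSpace ℝ (Fin n) := z₁ τ + b • q with hy_def
    set G : EuclideanSpace ℝ (Fin n) := gradient L y with hG_def
    set H : EuclideanSpace ℝ (Fin n) := gradient L (z₁ τ) with hH_def
    have habs : |b| ≤ 1 := by
      rw [hb_def, abs_div, abs_of_pos hs0, div_le_one hs0]
      rw [abs_le]
      constructor <;> linarith
    have hGb : ‖G‖ ≤ M * (‖p‖ + ‖q‖) := by
      have h := hLz y
      have hyzs : ‖y - zs‖ ≤ ‖p‖ + ‖q‖ := by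
        have e : y - zs = p + b • q := by rw [hy_def, hp_def]; module
        rw [e]
        refine le_trans (norm_add_le _ _) ?_
        have hbq : ‖b • q‖ ≤ ‖q‖ := by
          rw [norm_smul, Real.norm_eq_abs]
          calc |b| * ‖q‖ ≤ 1 * ‖q‖ := mul_le_mul_of_nonneg_right habs (norm_nonneg q)
            _ = ‖q‖ := one_mul _
        linarith
      calc ‖G‖ ≤ M * ‖y - zs‖ := h
        _ ≤ M * (‖p‖ + ‖q‖) := mul_le_mul_of_nonneg_left hyzs hM.le
    have hHb : ‖H‖ ≤ M * ‖p‖ := hLz (z₁ τ)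
    -- expand
    have e1 : ⟪q, -((2 * (3 / (2 * (τ + 2)))) • q) - k • G⟫
        = -((2 * (3 / (2 * (τ + 2)))) * ⟪q, q⟫) - k * ⟪q, G⟫ := by
      rw [inner_sub_right, inner_neg_right, real_inner_smul_right, real_inner_smul_right]
    have e2 : ⟪-((2 * (3 / (2 * (τ + 2)))) • q) - k • G, q⟫
        = -((2 * (3 / (2 * (τ + 2)))) * ⟪q, q⟫) - k * ⟪G, q⟫ := by
      rw [inner_sub_left, inner_neg_left, real_inner_smul_left, real_inner_smul_left]
    rw [e1, e2]
    have i1 : ⟪p, q⟫ ≤ ‖p‖ * ‖q‖ := real_inner_le_norm p q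
    have i2 : ⟪q, p⟫ ≤ ‖p‖ * ‖q‖ := by
      rw [real_inner_comm]; exact i1
    have i3 : -⟪q, G⟫ ≤ ‖q‖ * ‖G‖ := by
      have := abs_real_inner_le_norm q G
      have := abs_le.1 this
      linarith [this.1]
    have i4 : -⟪G, q⟫ ≤ ‖q‖ * ‖G‖ := by
      rw [real_inner_comm]; exact i3
    have i5 : ⟪H, q⟫ ≤ ‖H‖ * ‖q‖ := real_inner_le_norm H q
    have i6 : (0:ℝ) ≤ ⟪q, q⟫ := real_inner_self_nonneg
    have i7 : (0:ℝ) ≤ 2 * (3 / (2 * (τ + 2))) := by positivity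
    have hqq : ⟪q, q⟫ = ‖q‖ ^ 2 := real_inner_self_eq_norm_sq q
    have hpp : ⟪p, p⟫ = ‖p‖ ^ 2 := real_inner_self_eq_norm_sq p
    have hQτ : Q τ = ⟪p, p⟫ + ⟪q, q⟫ + k * (L (z₁ τ) - L zs) := rfl
    rw [hQτ]
    have hmin' : 0 ≤ k * (L (z₁ τ) - L zs) := mul_nonneg hk.le (by linarith [hmin (z₁ τ)])
    have hkM : k * M = ζ ^ 2 := by rw [hk_def]; field_simp
    have hK1 : (0:ℝ) < K := by rw [hK_def]; positivity
    have hnp : (0:ℝ) ≤ ‖p‖ := norm_nonneg p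
    have hnq : (0:ℝ) ≤ ‖q‖ := norm_nonneg q
    have hkG : k * ‖G‖ ≤ ζ ^ 2 * (‖p‖ + ‖q‖) := by
      calc k * ‖G‖ ≤ k * (M * (‖p‖ + ‖q‖)) := mul_le_mul_of_nonneg_left hGb hk.le
        _ = ζ ^ 2 * (‖p‖ + ‖q‖) := by rw [← hkM]; ring
    have hkH : k * ‖H‖ ≤ ζ ^ 2 * ‖p‖ := by
      calc k * ‖H‖ ≤ k * (M * ‖p‖) := mul_le_mul_of_nonneg_left (hLz (z₁ τ)) hk.le
        _ = ζ ^ 2 * ‖p‖ := by rw [← hkM]; ring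
    have hfin : ⟪p, q⟫ + ⟪q, p⟫
        + (-((2 * (3 / (2 * (τ + 2)))) * ⟪q, q⟫) - k * ⟪q, G⟫)
        + (-((2 * (3 / (2 * (τ + 2)))) * ⟪q, q⟫) - k * ⟪G, q⟫)
        + k * ⟪H, q⟫ ≤ K * (‖p‖ ^ 2 + ‖q‖ ^ 2) := by
      have t1 : -(k * ⟪q, G⟫) ≤ k * (‖q‖ * ‖G‖) := by
        have := mul_le_mul_of_nonneg_left i3 hk.le
        linarith
      have t2 : -(k * ⟪G, q⟫) ≤ k * (‖q‖ * ‖G‖) := by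
        have := mul_le_mul_of_nonneg_left i4 hk.le
        linarith
      have t3 : k * ⟪H, q⟫ ≤ k * (‖H‖ * ‖q‖) := mul_le_mul_of_nonneg_left i5 hk.le
      have t4 : k * (‖q‖ * ‖G‖) ≤ ζ ^ 2 * (‖p‖ + ‖q‖) * ‖q‖ := by
        have := mul_le_mul_of_nonneg_right hkG hnq
        linarith
      have t5 : k * (‖H‖ * ‖q‖) ≤ ζ ^ 2 * ‖p‖ * ‖q‖ := by
        have := mul_le_mul_of_nonneg_right hkH hnq
        linarith
      have s1 : -(k * ⟪q, G⟫) ≤ ζ ^ 2 * (‖p‖ + ‖q‖) * ‖q‖ := le_trans t1 t4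
      have s2 : -(k * ⟪G, q⟫) ≤ ζ ^ 2 * (‖p‖ + ‖q‖) * ‖q‖ := le_trans t2 t4
      have s3 : k * ⟪H, q⟫ ≤ ζ ^ 2 * ‖p‖ * ‖q‖ := le_trans t3 t5
      have hkey := aux_keyQfin (ζ ^ 2) (2 * (3 / (2 * (τ + 2)))) ‖p‖ ‖q‖
        ⟪p, q⟫ ⟪q, p⟫ (k * ⟪q, G⟫) (k * ⟪G, q⟫) (k * ⟪H, q⟫) 0
        (sq_nonneg ζ) i7 hnp hnq le_rfl i1 i2 s1 s2 s3
      rw [hK_def, hqq]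
      linarith [hkey]
    have hfin2 : K * (‖p‖ ^ 2 + ‖q‖ ^ 2) ≤ K * (⟪p, p⟫ + ⟪q, q⟫ + k * (L (z₁ τ) - L zs)) := by
      apply mul_le_mul_of_nonneg_left _ hK1.le
      rw [hpp, hqq]
      linarith [hmin']
    have hcomb := hfin.trans hfin2
    ring_nf at hcomb ⊢
    linarith [hcomb]
  -- R := exp(-(K σ)) * Q σ
  set R : ℝ → ℝ := fun σ => Real.exp (-(K * σ)) * Q σ with hR_def
  have hRD : ∀ τ : ℝ, 0 ≤ τ → ∃ d : ℝ, HasDerivAt R d τ ∧ d ≤ 0 := by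
    intro τ hτ
    have hexp : HasDerivAt (fun σ : ℝ => Real.exp (-(K * σ)))
        (Real.exp (-(K * τ)) * (-K)) τ := by
      have h1 : HasDerivAt (fun σ : ℝ => -(K * σ)) (-K) τ := by
        simpa [Pi.neg_def] using ((hasDerivAt_id τ).const_mul K).neg
      exact h1.exp
    refine ⟨_, hexp.mul (hQD τ hτ), ?_⟩
    have hQb := hQbound τ hτ
    have he : (0:ℝ) < Real.exp (-(K * τ)) := Real.exp_pos _
    linarith [mul_le_mul_of_nonneg_left hQb he.le]
  have hR_anti : AntitoneOn R (Set.Icc 0 1) := by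
    apply antitoneOn_of_deriv_nonpos (convex_Icc 0 1)
    · intro τ hτ
      obtain ⟨d, hdAt, _⟩ := hRD τ hτ.1
      exact hdAt.continuousAt.continuousWithinAt
    · intro τ hτ
      rw [interior_Icc] at hτ
      obtain ⟨d, hdAt, _⟩ := hRD τ hτ.1.le
      exact hdAt.differentiableAt.differentiableWithinAt
    · intro τ hτ
      rw [interior_Icc] at hτ
      obtain ⟨d, hdAt, hdle⟩ := hRD τ hτ.1.le
      rw [hdAt.deriv]
      exact hdle
  have hQ10 : Q 1 ≤ Real.exp K * Q 0 := by
    have h := hR_anti (Set.mem_Icc.2 ⟨le_refl (0:ℝ), zero_le_one⟩)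
      (Set.mem_Icc.2 ⟨zero_le_one, le_refl (1:ℝ)⟩) zero_le_one
    have h0 : R 0 = Q 0 := by rw [hR_def]; simp
    have h1 : R 1 = Real.exp (-K) * Q 1 := by rw [hR_def]; norm_num
    rw [h0, h1] at h
    have he : (0:ℝ) < Real.exp (-K) := Real.exp_pos _
    have := mul_le_mul_of_nonneg_left h (Real.exp_pos K).le
    rw [← mul_assoc, ← Real.exp_add] at this
    simpa using this
  -- V 1 ≤ Q 1
  have hV1Q1 : V 1 ≤ Q 1 := by
    have hu1 : u 1 = (2/3 : ℝ) • (z₁ 1 - zs) + z₂ 1 := by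
      rw [hu_def]; norm_num
    set p : EuclideanSpace ℝ (Fin n) := z₁ 1 - zs with hp_def
    set q : EuclideanSpace ℝ (Fin n) := z₂ 1 with hq_def
    have hVQ : V 1 = (1/2) * ⟪u 1, u 1⟫ + k * (L (z₁ 1) - L zs) := rfl
    have hQ1 : Q 1 = ⟪p, p⟫ + ⟪q, q⟫ + k * (L (z₁ 1) - L zs) := rfl
    rw [hVQ, hQ1]
    have hexp : ⟪u 1, u 1⟫ = (4/9) * ⟪p, p⟫ + (4/3) * ⟪p, q⟫ + ⟪q, q⟫ := by
      rw [hu1]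
      simp only [inner_add_left, inner_add_right, real_inner_smul_left, real_inner_smul_right]
      rw [real_inner_comm q p]
      ring
    rw [hexp]
    have hpq : 2 * ⟪p, q⟫ ≤ ⟪p, p⟫ + ⟪q, q⟫ := by
      have h := real_inner_self_nonneg (x := p - q)
      rw [inner_sub_sub_self] at h
      linarith [real_inner_comm q p]
    have hp0 : (0:ℝ) ≤ ⟪p, p⟫ := real_inner_self_nonneg
    have hq0 : (0:ℝ) ≤ ⟪q, q⟫ := real_inner_self_nonneg
    linarith [hpq, hp0, hq0]
  -- Q 0 bound
  have hQ0 : Q 0 ≤ (1 + ζ ^ 2) * (⟪z₁ 0 - zs, z₁ 0 - zs⟫ + ⟪z₂ 0, z₂ 0⟫) := by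
    have hQ0e : Q 0 = ⟪z₁ 0 - zs, z₁ 0 - zs⟫ + ⟪z₂ 0, z₂ 0⟫ + k * (L (z₁ 0) - L zs) := rfl
    rw [hQ0e]
    set p : EuclideanSpace ℝ (Fin n) := z₁ 0 - zs with hp_def
    have h := hJ (z₁ 0) zs
    have e : ⟪gradient L (z₁ 0), zs - z₁ 0⟫ = -⟪gradient L (z₁ 0), p⟫ := by
      have e2 : zs - z₁ 0 = -p := by rw [hp_def]; module
      rw [e2, inner_neg_right]
    rw [e] at h
    have h2 : L (z₁ 0) - L zs ≤ ⟪gradient L (z₁ 0), p⟫ := by linarith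
    have h3 : ⟪gradient L (z₁ 0), p⟫ ≤ M * ‖p‖ ^ 2 := by
      calc ⟪gradient L (z₁ 0), p⟫ ≤ ‖gradient L (z₁ 0)‖ * ‖p‖ := real_inner_le_norm _ _
        _ ≤ (M * ‖p‖) * ‖p‖ := mul_le_mul_of_nonneg_right (hLz (z₁ 0)) (norm_nonneg p)
        _ = M * ‖p‖ ^ 2 := by ring
    have hpp : ⟪p, p⟫ = ‖p‖ ^ 2 := real_inner_self_eq_norm_sq p
    have hkM : k * M = ζ ^ 2 := by rw [hk_def]; field_simp
    have h4 : k * (L (z₁ 0) - L zs) ≤ ζ ^ 2 * ⟪p, p⟫ := by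
      rw [hpp]
      calc k * (L (z₁ 0) - L zs) ≤ k * (M * ‖p‖ ^ 2) :=
            mul_le_mul_of_nonneg_left (le_trans h2 h3) hk.le
        _ = ζ ^ 2 * ‖p‖ ^ 2 := by rw [← hkM]; ring
    have hq0 : (0:ℝ) ≤ ⟪z₂ 0, z₂ 0⟫ := real_inner_self_nonneg
    have hp0 : (0:ℝ) ≤ ⟪p, p⟫ := real_inner_self_nonneg
    linarith [h4, mul_nonneg (sq_nonneg ζ) hq0]
  -- conclusion
  have hVnn : ∀ τ : ℝ, 0 ≤ (1/2 : ℝ) * ⟪u τ, u τ⟫ :=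
    fun τ => by linarith [real_inner_self_nonneg (x := u τ)]
  have hgoalV : (1 / 2) * ‖(2 / (t + 2)) • (z₁ t - zs) + z₂ t‖ ^ 2
      + k * (L (z₁ t) - L zs) = V t := by
    have h1 : ‖(2 / (t + 2)) • (z₁ t - zs) + z₂ t‖ ^ 2 = ⟪u t, u t⟫ :=
      (real_inner_self_eq_norm_sq _).symm
    rw [h1]
  constructor
  · rw [hgoalV]
    have hVte : V t = (1/2) * ⟪u t, u t⟫ + k * (L (z₁ t) - L zs) := rfl
    rw [hVte]
    linarith [real_inner_self_nonneg (x := u t)]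
  · rw [hgoalV]
    have hS : ‖z₁ 0 - zs‖ ^ 2 + ‖z₂ 0‖ ^ 2 = ⟪z₁ 0 - zs, z₁ 0 - zs⟫ + ⟪z₂ 0, z₂ 0⟫ := by
      rw [real_inner_self_eq_norm_sq, real_inner_self_eq_norm_sq]
    rw [hS]
    set S : ℝ := ⟪z₁ 0 - zs, z₁ 0 - zs⟫ + ⟪z₂ 0, z₂ 0⟫ with hS_def
    have hS0 : 0 ≤ S := by
      rw [hS_def]
      have := real_inner_self_nonneg (x := z₁ 0 - zs)
      have := real_inner_self_nonneg (x := z₂ 0)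
      linarith
    have hts : (0:ℝ) < (t + 2) ^ 2 := pow_pos (by linarith) 2
    rw [div_mul_eq_mul_div, le_div_iff₀ hts]
    have hexpK : (0:ℝ) < Real.exp K := Real.exp_pos K
    calc V t * (t + 2) ^ 2 = (t + 2) ^ 2 * V t := by ring
      _ ≤ 9 * V 1 := hVt9
      _ ≤ 9 * Q 1 := by linarith [hV1Q1]
      _ ≤ 9 * (Real.exp K * Q 0) := by linarith [hQ10]
      _ ≤ 9 * (Real.exp K * ((1 + ζ ^ 2) * S)) := by
            have := mul_le_mul_of_nonneg_left hQ0 hexpK.le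
            linarith
      _ = 9 * (Real.exp K * (1 + ζ ^ 2)) * S := by ring

end
end
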